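/- arXiv:1602.02302 — 6 statements merged into one kernel-verified Lean document; each statement's English description precedes it below -/
import Mathlib

section
/- Let r ≥ 3 and let G = (V,E) be a maximal K_r-free graph. If u and v are two distinct non-adjacent vertices of G, then the number of common neighbours of u and v satisfies |N(u) ∩ N(v)| ≥ r·δ(G) − (r−2)·|V| (as an inequality of integers, or equivalently of reals). -/
open Finset

/-- In a maximal `K_r`-free graph (`r ≥ 3`), any two distinct non-adjacent vertices `u`, `v`
satisfy `|N(u) ∩ N(v)| ≥ r·δ(G) − (r−2)·|V|`. -/
theorem common_nbhd_of_nonadjacent (r : ℕ) (hr : 3 ≤ r)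
    (V : Type) [Fintype V] [DecidableEq V]
    (G : SimpleGraph V) [DecidableRel G.Adj]
    (hfree : G.CliqueFree r)
    (hmax : ∀ x y : V, x ≠ y → ¬ G.Adj x y →
      ¬ (G ⊔ SimpleGraph.edge x y).CliqueFree r)
    (u v : V) (huv : u ≠ v) (hnadj : ¬ G.Adj u v) :
    (r : ℝ) * G.minDegree - ((r : ℝ) - 2) * Fintype.card V ≤
      ((G.neighborFinset u ∩ G.neighborFinset v).card : ℝ) := by
  classical
  have h := hmax u v huv hnadj
  rw [SimpleGraph.CliqueFree] at h
  push_neg at h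
  obtain ⟨s, hs⟩ := h
  have hcard : s.card = r := hs.card_eq
  have hclq := hs.isClique
  -- adjacency within s, except possibly the pair {u,v}, is in G
  have hGadj : ∀ x ∈ s, ∀ y ∈ s, x ≠ y → ¬(x = u ∧ y = v) → ¬(x = v ∧ y = u) →
      G.Adj x y := by
    intro x hx y hy hxy h1 h2
    have := hclq (Finset.mem_coe.mpr hx) (Finset.mem_coe.mpr hy) hxy
    rcases this with h | h
    · exact h
    · rw [SimpleGraph.edge_adj] at h
      rcases h.1 with ⟨rfl, rfl⟩ | ⟨rfl, rfl⟩
      · exact absurd ⟨rfl, rfl⟩ h1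
      · exact absurd ⟨rfl, rfl⟩ h2
  have hu : u ∈ s := by
    by_contra hu
    refine hfree s ⟨fun x hx y hy hxy => ?_, hcard⟩
    refine hGadj x hx y hy hxy ?_ ?_
    · rintro ⟨rfl, rfl⟩; exact hu hx
    · rintro ⟨rfl, rfl⟩; exact hu hy
  have hv : v ∈ s := by
    by_contra hv
    refine hfree s ⟨fun x hx y hy hxy => ?_, hcard⟩
    refine hGadj x hx y hy hxy ?_ ?_
    · rintro ⟨rfl, rfl⟩; exact hv hy
    · rintro ⟨rfl, rfl⟩; exact hv hx
  -- no vertex is adjacent to all of s.erase u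
  have missu : ∀ x : V, ∃ y ∈ s.erase u, ¬ G.Adj x y := by
    intro x
    by_contra hcon
    push_neg at hcon
    have hxnot : x ∉ s.erase u := fun hx => (G.irrefl : ¬ G.Adj x x) (hcon x hx)
    refine hfree (insert x (s.erase u)) ⟨?_, ?_⟩
    · intro a ha b hb hab
      simp only [coe_insert, Set.mem_insert_iff, Finset.mem_coe] at ha hb
      rcases ha with rfl | ha
      · rcases hb with rfl | hb
        · exact absurd rfl hab
        · exact hcon b hb
      · rcases hb with rfl | hb
        · exact (hcon a ha).symm
        · have hau : a ≠ u := (Finset.mem_erase.mp ha).1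
          have hbu : b ≠ u := (Finset.mem_erase.mp hb).1
          refine hGadj a (Finset.mem_of_mem_erase ha) b (Finset.mem_of_mem_erase hb) hab ?_ ?_
          · rintro ⟨rfl, rfl⟩; exact hau rfl
          · rintro ⟨rfl, rfl⟩; exact hbu rfl
    · rw [Finset.card_insert_of_notMem hxnot, Finset.card_erase_of_mem hu, hcard]
      omega
  have missv : ∀ x : V, ∃ y ∈ s.erase v, ¬ G.Adj x y := by
    intro x
    by_contra hcon
    push_neg at hcon
    have hxnot : x ∉ s.erase v := fun hx => (G.irrefl : ¬ G.Adj x x) (hcon x hx)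
    refine hfree (insert x (s.erase v)) ⟨?_, ?_⟩
    · intro a ha b hb hab
      simp only [coe_insert, Set.mem_insert_iff, Finset.mem_coe] at ha hb
      rcases ha with rfl | ha
      · rcases hb with rfl | hb
        · exact absurd rfl hab
        · exact hcon b hb
      · rcases hb with rfl | hb
        · exact (hcon a ha).symm
        · have hav : a ≠ v := (Finset.mem_erase.mp ha).1
          have hbv : b ≠ v := (Finset.mem_erase.mp hb).1
          refine hGadj a (Finset.mem_of_mem_erase ha) b (Finset.mem_of_mem_erase hb) hab ?_ ?_
          · rintro ⟨rfl, rfl⟩; exact hbv rfl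
          · rintro ⟨rfl, rfl⟩; exact hav rfl
    · rw [Finset.card_insert_of_notMem hxnot, Finset.card_erase_of_mem hv, hcard]
      omega
  set C := G.neighborFinset u ∩ G.neighborFinset v with hC
  -- per-vertex bound
  have hbound : ∀ x : V, (G.neighborFinset x ∩ s).card ≤
      (r - 2) + (if x ∈ C then 1 else 0) := by
    intro x
    by_cases hxC : x ∈ C
    · rw [if_pos hxC]
      obtain ⟨y, hy, hny⟩ := missu x
      have hys : y ∈ s := Finset.mem_of_mem_erase hy
      have hsub : G.neighborFinset x ∩ s ⊆ s.erase y := by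
        intro z hz
        rw [Finset.mem_inter, SimpleGraph.mem_neighborFinset] at hz
        rw [Finset.mem_erase]
        exact ⟨fun h => hny (h ▸ hz.1), hz.2⟩
      have := Finset.card_le_card hsub
      rw [Finset.card_erase_of_mem hys, hcard] at this
      omega
    · rw [if_neg hxC, add_zero]
      have hor : ¬ G.Adj x u ∨ ¬ G.Adj x v := by
        by_contra hcon
        push_neg at hcon
        exact hxC (Finset.mem_inter.mpr ⟨SimpleGraph.mem_neighborFinset _ _ _ |>.mpr hcon.1.symm,
          SimpleGraph.mem_neighborFinset _ _ _ |>.mpr hcon.2.symm⟩)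
      rcases hor with hn | hn
      · obtain ⟨y, hy, hny⟩ := missu x
        have hsub : G.neighborFinset x ∩ s ⊆ (s.erase u).erase y := by
          intro z hz
          rw [Finset.mem_inter, SimpleGraph.mem_neighborFinset] at hz
          rw [Finset.mem_erase, Finset.mem_erase]
          exact ⟨fun h => hny (h ▸ hz.1), fun h => hn (h ▸ hz.1), hz.2⟩
        have := Finset.card_le_card hsub
        rw [Finset.card_erase_of_mem hy, Finset.card_erase_of_mem hu, hcard] at this
        omega
      · obtain ⟨y, hy, hny⟩ := missv x
        have hsub : G.neighborFinset x ∩ s ⊆ (s.erase v).erase y := by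
          intro z hz
          rw [Finset.mem_inter, SimpleGraph.mem_neighborFinset] at hz
          rw [Finset.mem_erase, Finset.mem_erase]
          exact ⟨fun h => hny (h ▸ hz.1), fun h => hn (h ▸ hz.1), hz.2⟩
        have := Finset.card_le_card hsub
        rw [Finset.card_erase_of_mem hy, Finset.card_erase_of_mem hv, hcard] at this
        omega
  -- double counting
  have hsum2 : ∑ t ∈ s, G.degree t = ∑ x : V, (G.neighborFinset x ∩ s).card := by
    have hdeg : ∀ t : V, G.degree t = ∑ x : V, (if G.Adj t x then 1 else 0) := by
      intro t
      rw [← SimpleGraph.card_neighborFinset_eq_degree, SimpleGraph.neighborFinset_eq_filter,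
        Finset.card_filter]
    have hfil : ∀ x : V, (s.filter (fun t => G.Adj t x)) = G.neighborFinset x ∩ s := by
      intro x
      ext z
      simp only [Finset.mem_filter, Finset.mem_inter, SimpleGraph.mem_neighborFinset]
      rw [SimpleGraph.adj_comm]
      tauto
    calc ∑ t ∈ s, G.degree t = ∑ t ∈ s, ∑ x : V, (if G.Adj t x then 1 else 0) := by
          exact Finset.sum_congr rfl fun t _ => hdeg t
      _ = ∑ x : V, ∑ t ∈ s, (if G.Adj t x then 1 else 0) := Finset.sum_comm
      _ = ∑ x : V, (s.filter (fun t => G.Adj t x)).card := by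
          exact Finset.sum_congr rfl fun x _ => (Finset.card_filter _ _).symm
      _ = ∑ x : V, (G.neighborFinset x ∩ s).card := by
          exact Finset.sum_congr rfl fun x _ => by rw [hfil x]
  have hsum1 : r * G.minDegree ≤ ∑ t ∈ s, G.degree t := by
    calc r * G.minDegree = ∑ _t ∈ s, G.minDegree := by
          rw [Finset.sum_const, hcard, smul_eq_mul]
      _ ≤ ∑ t ∈ s, G.degree t := Finset.sum_le_sum fun t _ => G.minDegree_le_degree t
  have hsum3 : ∑ x : V, (G.neighborFinset x ∩ s).card ≤
      Fintype.card V * (r - 2) + C.card := by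
    calc ∑ x : V, (G.neighborFinset x ∩ s).card
        ≤ ∑ x : V, ((r - 2) + (if x ∈ C then 1 else 0)) :=
          Finset.sum_le_sum fun x _ => hbound x
      _ = Fintype.card V * (r - 2) + ∑ x : V, (if x ∈ C then 1 else 0) := by
          rw [Finset.sum_add_distrib, Finset.sum_const, Finset.card_univ, smul_eq_mul]
      _ = Fintype.card V * (r - 2) + C.card := by
          congr 1
          rw [Finset.sum_ite_mem, Finset.univ_inter]
          exact (Finset.card_eq_sum_ones C).symm
  have hnat : r * G.minDegree ≤ Fintype.card V * (r - 2) + C.card := by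
    omega
  have hcast : (r : ℝ) * G.minDegree ≤ (Fintype.card V : ℝ) * ((r : ℝ) - 2) + C.card := by
    have h2 : (2 : ℕ) ≤ r := by omega
    have := (Nat.cast_le (α := ℝ)).mpr hnat
    push_cast [Nat.cast_sub h2] at this
    linarith
  rw [hC] at hcast ⊢
  linarith
end

section
/- Let r ≥ 3 and ε > 0, and let G = (V,E) be a maximal K_r-free graph with minimum degree δ(G) ≥ ((2r-5)/(2r-3) + ε)·|V|. If u and v are two distinct non-adjacent vertices of G and U ⊆ V satisfies |U| < ε·|V|, then the induced subgraph of G on (N(u) ∩ N(v)) \ U contains a clique on r−2 vertices. -/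
open Finset


/-- In a maximal `K_r`-free graph with minimum degree at least `((2r-5)/(2r-3)+ε)|V|`,
for any two distinct non-adjacent vertices `u`, `v` and any set `U` with `|U| < ε|V|`,
the induced subgraph on `(N(u) ∩ N(v)) \ U` contains a clique on `r − 2` vertices. -/
theorem clique_in_common_nbhd_avoiding_set (r : ℕ) (hr : 3 ≤ r) (ε : ℝ) (hε : 0 < ε)
    (V : Type) [Fintype V]
    (G : SimpleGraph V) [DecidableRel G.Adj]
    (hfree : G.CliqueFree r)
    (hmax : ∀ x y : V, x ≠ y → ¬ G.Adj x y →
      ¬ (G ⊔ SimpleGraph.edge x y).CliqueFree r)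
    (hδ : ((2 * (r : ℝ) - 5) / (2 * (r : ℝ) - 3) + ε) * Fintype.card V ≤ G.minDegree)
    (u v : V) (huv : u ≠ v) (hnadj : ¬ G.Adj u v)
    (U : Set V) (hU : (U.ncard : ℝ) < ε * Fintype.card V) :
    ∃ t : Finset V, G.IsNClique (r - 2) t ∧
      ↑t ⊆ (G.neighborSet u ∩ G.neighborSet v) \ U := by
  classical
  set n := Fintype.card V with hn
  set δ := G.minDegree with hδdef
  have hrR : (3 : ℝ) ≤ (r : ℝ) := by exact_mod_cast hr
  have h2r3 : (0 : ℝ) < 2 * (r : ℝ) - 3 := by linarith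
  -- basic degree facts
  have hdegub : ∀ x : V, (G.degree x : ℝ) ≤ (n : ℝ) := by
    intro x
    exact_mod_cast Finset.card_le_univ (G.neighborFinset x)
  have hdeglb : ∀ x : V, (δ : ℝ) ≤ (G.degree x : ℝ) := by
    intro x; exact_mod_cast G.minDegree_le_degree x
  have hnδ : (0 : ℝ) ≤ (n : ℝ) - (δ : ℝ) := by
    have := hdegub u; have := hdeglb u; linarith
  -- δ lower bound in convenient form
  have hδR : (2 * (r : ℝ) - 5) * n + (2 * (r : ℝ) - 3) * ε * n ≤ (2 * (r : ℝ) - 3) * δ := by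
    have hn0 : (0 : ℝ) ≤ (n : ℝ) := Nat.cast_nonneg n
    have := mul_le_mul_of_nonneg_left hδ (le_of_lt h2r3)
    have hdiv : (2 * (r : ℝ) - 3) * ((2 * (r : ℝ) - 5) / (2 * (r : ℝ) - 3)) = 2 * (r : ℝ) - 5 := by
      field_simp
    nlinarith [this]
  -- Step 1: get a K_r in G ⊔ edge u v
  have hnc : ¬ (G ⊔ SimpleGraph.edge u v).CliqueFree r := hmax u v huv hnadj
  rw [SimpleGraph.CliqueFree, not_forall] at hnc
  obtain ⟨s, hs⟩ := hnc
  rw [not_not] at hs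
  -- u and v must belong to s
  have hGclique : (u ∉ s ∨ v ∉ s) → False := by
    intro h
    refine hfree s ⟨?_, hs.2⟩
    intro a ha b hb hab
    have := hs.1 ha hb hab
    rw [SimpleGraph.sup_adj, SimpleGraph.edge_adj] at this
    rcases this with h' | ⟨h', _⟩
    · exact h'
    · exfalso; rcases h' with ⟨rfl, rfl⟩ | ⟨rfl, rfl⟩ <;> tauto
  have hus : u ∈ s := by by_contra h; exact hGclique (Or.inl h)
  have hvs : v ∈ s := by by_contra h; exact hGclique (Or.inr h)
  set T : Finset V := (s.erase v).erase u with hTdef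
  have hTsub : T ⊆ s := (erase_subset _ _).trans (erase_subset _ _)
  have hTu : ∀ t ∈ T, t ≠ u ∧ t ≠ v := by
    intro t ht
    exact ⟨ne_of_mem_erase ht, ne_of_mem_erase (mem_of_mem_erase ht)⟩
  have hadjG : ∀ a ∈ s, ∀ b ∈ s, a ≠ b → ({a, b} : Set V) ≠ {u, v} → G.Adj a b := by
    intro a ha b hb hab hne
    have := hs.1 ha hb hab
    rw [SimpleGraph.sup_adj, SimpleGraph.edge_adj] at this
    rcases this with h' | ⟨h', _⟩
    · exact h'
    · exfalso; apply hne
      rcases h' with ⟨rfl, rfl⟩ | ⟨rfl, rfl⟩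
      · rfl
      · exact Set.pair_comm a b
  have hTadj : ∀ a ∈ T, ∀ b ∈ T, a ≠ b → G.Adj a b := by
    intro a ha b hb hab
    refine hadjG a (hTsub ha) b (hTsub hb) hab ?_
    intro hpair
    have : a ∈ ({u, v} : Set V) := by rw [← hpair]; exact Set.mem_insert a {b}
    rcases this with h | h
    · exact (hTu a ha).1 h
    · exact (hTu a ha).2 h
  have hTcard : T.card = r - 2 := by
    rw [hTdef, card_erase_of_mem (by exact mem_erase_of_ne_of_mem huv hus),
      card_erase_of_mem hvs, hs.2]
    omega
  have hTclique : G.IsNClique (r - 2) T := ⟨hTadj, hTcard⟩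
  have hadjTu : ∀ t ∈ T, G.Adj u t := by
    intro t ht
    refine hadjG u hus t (hTsub ht) (Ne.symm (hTu t ht).1) ?_
    intro hpair
    have : t ∈ ({u, v} : Set V) := by rw [← hpair]; exact Set.mem_insert_of_mem _ rfl
    rcases this with h | h
    · exact (hTu t ht).1 h
    · exact (hTu t ht).2 h
  have hadjTv : ∀ t ∈ T, G.Adj v t := by
    intro t ht
    refine hadjG v hvs t (hTsub ht) (Ne.symm (hTu t ht).2) ?_
    intro hpair
    have : t ∈ ({v, t} : Set V) := Set.mem_insert_of_mem _ rfl
    rw [hpair] at this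
    rcases this with h | h
    · exact (hTu t ht).1 h
    · exact (hTu t ht).2 h
  -- Step 2: a common neighbor of all of T is adjacent to neither u nor v
  have hcov : ∀ x : V, (∀ t ∈ T, G.Adj t x) → ¬ G.Adj u x ∧ ¬ G.Adj v x := by
    intro x hx
    constructor
    · intro hux
      have h1 : G.IsNClique (r - 2 + 1) (insert u T) := hTclique.insert hadjTu
      have h2 : G.IsNClique (r - 2 + 1 + 1) (insert x (insert u T)) := by
        refine h1.insert ?_
        intro b hb
        rcases mem_insert.mp hb with rfl | hb
        · exact hux.symm
        · exact (hx b hb).symm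
      have : r - 2 + 1 + 1 = r := by omega
      rw [this] at h2
      exact hfree _ h2
    · intro hvx
      have h1 : G.IsNClique (r - 2 + 1) (insert v T) := hTclique.insert hadjTv
      have h2 : G.IsNClique (r - 2 + 1 + 1) (insert x (insert v T)) := by
        refine h1.insert ?_
        intro b hb
        rcases mem_insert.mp hb with rfl | hb
        · exact hvx.symm
        · exact (hx b hb).symm
      have : r - 2 + 1 + 1 = r := by omega
      rw [this] at h2
      exact hfree _ h2
  -- Step 3: |N(u) ∩ N(v)| ≥ rδ - (r-2)n
  set Wf : Finset V := G.neighborFinset u ∩ G.neighborFinset v with hWf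
  have hWlb : (r : ℝ) * δ - ((r : ℝ) - 2) * n ≤ (Wf.card : ℝ) := by
    have hsub : G.neighborFinset u ∪ G.neighborFinset v ⊆
        T.biUnion (fun t => (G.neighborFinset t)ᶜ) := by
      intro x hx
      rw [mem_biUnion]
      by_contra h
      push_neg at h
      have hall : ∀ t ∈ T, G.Adj t x := by
        intro t ht
        have := h t ht
        rw [mem_compl, not_not, SimpleGraph.mem_neighborFinset] at this
        exact this
      have := hcov x hall
      rcases mem_union.mp hx with h' | h'
      · rw [SimpleGraph.mem_neighborFinset] at h'; exact this.1 h'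
      · rw [SimpleGraph.mem_neighborFinset] at h'; exact this.2 h'
    have hub : ((G.neighborFinset u ∪ G.neighborFinset v).card : ℝ) ≤
        ((r : ℝ) - 2) * ((n : ℝ) - δ) := by
      calc ((G.neighborFinset u ∪ G.neighborFinset v).card : ℝ)
          ≤ ((T.biUnion (fun t => (G.neighborFinset t)ᶜ)).card : ℝ) := by
            exact_mod_cast Finset.card_le_card hsub
        _ ≤ ∑ t ∈ T, (((G.neighborFinset t)ᶜ.card : ℝ)) := by
            exact_mod_cast Finset.card_biUnion_le
        _ ≤ ∑ t ∈ T, ((n : ℝ) - δ) := by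
            refine Finset.sum_le_sum ?_
            intro t _
            have h1 : (G.neighborFinset t).card ≤ n := Finset.card_le_univ _
            have hc : ((G.neighborFinset t)ᶜ.card : ℝ) = (n : ℝ) - (G.neighborFinset t).card := by
              rw [Finset.card_compl, Nat.cast_sub h1]
            rw [hc]
            have h2 : (δ : ℝ) ≤ ((G.neighborFinset t).card : ℝ) := hdeglb t
            linarith
        _ = ((T.card : ℝ)) * ((n : ℝ) - δ) := by rw [Finset.sum_const, nsmul_eq_mul]
        _ ≤ ((r : ℝ) - 2) * ((n : ℝ) - δ) := by
            have : (T.card : ℝ) = (r : ℝ) - 2 := by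
              rw [hTcard]; push_cast [Nat.cast_sub (by omega : 2 ≤ r)]; ring
            rw [this]
    have hcui : (Wf.card : ℝ) + ((G.neighborFinset u ∪ G.neighborFinset v).card : ℝ)
        = (G.degree u : ℝ) + (G.degree v : ℝ) := by
      rw [hWf]
      have := Finset.card_inter_add_card_union (G.neighborFinset u) (G.neighborFinset v)
      have h' : (G.neighborFinset u).card = G.degree u := rfl
      have h'' : (G.neighborFinset v).card = G.degree v := rfl
      exact_mod_cast by rw [← h', ← h'']; exact_mod_cast this
    have := hdeglb u; have := hdeglb v
    nlinarith [hub, hcui]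
  -- Step 4: greedy construction of a clique inside (N(u) ∩ N(v)) \ U
  set Uf : Finset V := Set.toFinset U with hUf
  have hUcard : (U.ncard : ℝ) = (Uf.card : ℝ) := by
    rw [hUf]
    exact_mod_cast congrArg (Nat.cast : ℕ → ℝ) (Set.ncard_eq_toFinset_card' U)
  have hn1 : (1 : ℝ) ≤ (n : ℝ) := by
    have : 0 < n := Fintype.card_pos_iff.mpr ⟨u⟩
    exact_mod_cast this
  have key : ∀ k : ℕ, k ≤ r - 2 → ∃ t : Finset V, G.IsNClique k t ∧
      (∀ x ∈ t, x ∈ Wf ∧ x ∉ U) ∧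
      (Wf.card : ℝ) - Uf.card - k * ((n : ℝ) - δ) ≤
        ((Wf.filter fun z => z ∉ U ∧ ∀ y ∈ t, G.Adj y z).card : ℝ) := by
    intro k
    induction k with
    | zero =>
      intro _
      refine ⟨∅, by simp [SimpleGraph.isNClique_empty], by simp, ?_⟩
      have hsub0 : Wf ⊆ (Wf.filter fun z => z ∉ U ∧ ∀ y ∈ (∅ : Finset V), G.Adj y z) ∪ Uf := by
        intro x hx
        by_cases hxU : x ∈ U
        · exact mem_union_right _ (by rw [hUf, Set.mem_toFinset]; exact hxU)
        · exact mem_union_left _ (mem_filter.mpr ⟨hx, hxU, by simp⟩)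
      have := (Finset.card_le_card hsub0).trans (Finset.card_union_le _ _)
      push_cast
      have : (Wf.card : ℝ) ≤
          ((Wf.filter fun z => z ∉ U ∧ ∀ y ∈ (∅ : Finset V), G.Adj y z).card : ℝ) + Uf.card := by
        exact_mod_cast this
      linarith
    | succ k ih =>
      intro hk1
      obtain ⟨t, ht1, ht2, ht3⟩ := ih (by omega)
      set F := Wf.filter (fun z => z ∉ U ∧ ∀ y ∈ t, G.Adj y z) with hF
      have hkr3 : (k : ℝ) ≤ (r : ℝ) - 3 := by
        have h1 : k ≤ r - 3 := by omega
        have h2 : ((r - 3 : ℕ) : ℝ) = (r : ℝ) - 3 := by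
          rw [Nat.cast_sub hr]; norm_num
        calc (k : ℝ) ≤ ((r - 3 : ℕ) : ℝ) := by exact_mod_cast h1
          _ = (r : ℝ) - 3 := h2
      have hεn : (0 : ℝ) < ε * n := by
        apply mul_pos hε; linarith
      have hFpos : 0 < F.card := by
        by_contra h
        push_neg at h
        have hF0 : (F.card : ℝ) = 0 := by
          interval_cases hc : F.card <;> simp_all
        have hmul : (k : ℝ) * ((n : ℝ) - δ) ≤ ((r : ℝ) - 3) * ((n : ℝ) - δ) :=
          mul_le_mul_of_nonneg_right hkr3 hnδ
        have hU' : (Uf.card : ℝ) < ε * n := by rw [← hUcard]; exact hU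
        nlinarith [ht3, hWlb, hδR, hmul, hU',
          mul_nonneg (by linarith : (0:ℝ) ≤ 2*(r:ℝ)-6) (le_of_lt hεn)]
      obtain ⟨x, hx⟩ := Finset.card_pos.mp hFpos
      rw [hF, mem_filter] at hx
      obtain ⟨hxW, hxU, hxadj⟩ := hx
      have hxt : x ∉ t := fun h => G.irrefl (hxadj x h)
      refine ⟨insert x t, ht1.insert (fun b hb => (hxadj b hb).symm), ?_, ?_⟩
      · intro z hz
        rcases mem_insert.mp hz with rfl | hz
        · exact ⟨hxW, hxU⟩
        · exact ht2 z hz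
      · set F' := Wf.filter (fun z => z ∉ U ∧ ∀ y ∈ insert x t, G.Adj y z) with hF'
        have hsubF : F ⊆ F' ∪ (G.neighborFinset x)ᶜ := by
          intro z hz
          rw [hF, mem_filter] at hz
          obtain ⟨hzW, hzU, hzadj⟩ := hz
          by_cases hadj : G.Adj x z
          · refine mem_union_left _ (mem_filter.mpr ⟨hzW, hzU, ?_⟩)
            intro y hy
            rcases mem_insert.mp hy with rfl | hy
            · exact hadj
            · exact hzadj y hy
          · refine mem_union_right _ ?_
            rw [mem_compl, SimpleGraph.mem_neighborFinset]
            exact hadj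
        have hcompl : (((G.neighborFinset x)ᶜ).card : ℝ) ≤ (n : ℝ) - δ := by
          have h1 : (G.neighborFinset x).card ≤ n := Finset.card_le_univ _
          have hc : (((G.neighborFinset x)ᶜ).card : ℝ) = (n : ℝ) - (G.neighborFinset x).card := by
            rw [Finset.card_compl, Nat.cast_sub h1]
          rw [hc]
          have h2 : (δ : ℝ) ≤ ((G.neighborFinset x).card : ℝ) := hdeglb x
          linarith
        have hcard : (F.card : ℝ) ≤ (F'.card : ℝ) + (((G.neighborFinset x)ᶜ).card : ℝ) := by
          exact_mod_cast (Finset.card_le_card hsubF).trans (Finset.card_union_le _ _)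
        have ht3' : (Wf.card : ℝ) - Uf.card - k * ((n : ℝ) - δ) ≤ (F.card : ℝ) := ht3
        have hc1 : ((k + 1 : ℕ) : ℝ) = (k : ℝ) + 1 := by push_cast; ring
        rw [hc1]
        have hexp : ((k : ℝ) + 1) * ((n : ℝ) - δ) = (k : ℝ) * ((n : ℝ) - δ) + ((n : ℝ) - δ) := by
          ring
        rw [hexp]
        linarith [hcard, hcompl, ht3']
  obtain ⟨t, ht1, ht2, -⟩ := key (r - 2) le_rfl
  refine ⟨t, ht1, ?_⟩
  intro x hx
  obtain ⟨hxW, hxU⟩ := ht2 x hx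
  rw [hWf, mem_inter, SimpleGraph.mem_neighborFinset, SimpleGraph.mem_neighborFinset] at hxW
  exact ⟨⟨hxW.1, hxW.2⟩, hxU⟩
end

section
/- Let r ≥ 3 and ε > 0, and let G = (V,E) be a K_r-free graph with minimum degree δ(G) ≥ ((2r-5)/(2r-3) + ε)·|V|. If u and v are adjacent vertices of G, then their common neighbourhood satisfies |N(u) ∩ N(v)| < ((2r-6)/(2r-3) + ε)·|V|. -/
/-- Greedy clique lemma: if every vertex of `S` has at most `d` non-neighbours
within `S` (counting itself), and `k*d < |S| + d`, then `S` contains a `k`-clique. -/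
lemma greedy_clique {V : Type} [Fintype V] [DecidableEq V]
    (G : SimpleGraph V) [DecidableRel G.Adj] (d : ℝ) (hd : 0 ≤ d) :
    ∀ (k : ℕ) (S : Finset V), (∀ w ∈ S, ((S \ G.neighborFinset w).card : ℝ) ≤ d) →
      (k : ℝ) * d < S.card + d → ∃ t : Finset V, t ⊆ S ∧ G.IsNClique k t := by
  intro k
  induction k with
  | zero =>
    intro S _ _
    exact ⟨∅, Finset.empty_subset _, by simp [SimpleGraph.isNClique_empty]⟩
  | succ k ih =>
    intro S hS hcard
    have hkd : (k : ℝ) * d < S.card := by push_cast at hcard ⊢; nlinarith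
    have hSpos : 0 < S.card := by
      by_contra h
      push_neg at h
      interval_cases hS' : S.card <;> simp_all <;> nlinarith [mul_nonneg (Nat.cast_nonneg (α := ℝ) k) hd]
    obtain ⟨w, hw⟩ := Finset.card_pos.mp hSpos
    set S' := S ∩ G.neighborFinset w with hS'def
    have hsplit : (S').card + (S \ G.neighborFinset w).card = S.card :=
      Finset.card_inter_add_card_sdiff S (G.neighborFinset w)
    have hS'card : (k : ℝ) * d < (S').card + d := by
      have h1 : ((S \ G.neighborFinset w).card : ℝ) ≤ d := hS w hw
      have : (S.card : ℝ) = (S').card + (S \ G.neighborFinset w).card := by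
        exact_mod_cast hsplit.symm
      linarith
    have hS'sub : S' ⊆ S := Finset.inter_subset_left
    obtain ⟨t, htS', htcl⟩ := ih S' (fun w' hw' => by
      refine le_trans ?_ (hS w' (hS'sub hw'))
      exact_mod_cast Finset.card_le_card (Finset.sdiff_subset_sdiff hS'sub le_rfl)) hS'card
    have hwt : ∀ b ∈ t, G.Adj w b := by
      intro b hb
      have := htS' hb
      rw [hS'def, Finset.mem_inter, SimpleGraph.mem_neighborFinset] at this
      exact this.2
    refine ⟨insert w t, ?_, htcl.insert hwt⟩
    intro x hx
    rcases Finset.mem_insert.mp hx with rfl | hx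
    · exact hw
    · exact hS'sub (htS' hx)

/-- In a `K_r`-free graph with minimum degree at least `((2r-5)/(2r-3)+ε)|V|`,
any two adjacent vertices `u`, `v` satisfy `|N(u) ∩ N(v)| < ((2r-6)/(2r-3)+ε)|V|`. -/
theorem common_nbhd_of_adjacent_small (r : ℕ) (hr : 3 ≤ r) (ε : ℝ) (hε : 0 < ε)
    (V : Type) [Fintype V] [DecidableEq V]
    (G : SimpleGraph V) [DecidableRel G.Adj]
    (hfree : G.CliqueFree r)
    (hδ : ((2 * (r : ℝ) - 5) / (2 * (r : ℝ) - 3) + ε) * Fintype.card V ≤ G.minDegree)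
    (u v : V) (hadj : G.Adj u v) :
    ((G.neighborFinset u ∩ G.neighborFinset v).card : ℝ) <
      ((2 * (r : ℝ) - 6) / (2 * (r : ℝ) - 3) + ε) * Fintype.card V := by
  by_contra hcon
  push_neg at hcon
  set n : ℕ := Fintype.card V with hn
  have hn1 : 1 ≤ n := Fintype.card_pos_iff.mpr ⟨u⟩
  set W := G.neighborFinset u ∩ G.neighborFinset v with hW
  set d : ℝ := (n : ℝ) - G.minDegree with hd
  have hdle : ∀ w : V, ((W \ G.neighborFinset w).card : ℝ) ≤ d := by
    intro w
    have h1 : (W \ G.neighborFinset w).card ≤ n - G.degree w := by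
      calc (W \ G.neighborFinset w).card ≤ (Finset.univ \ G.neighborFinset w).card :=
            Finset.card_le_card (Finset.sdiff_subset_sdiff (Finset.subset_univ _) le_rfl)
        _ = n - G.degree w := by
            rw [Finset.card_sdiff_of_subset (Finset.subset_univ _), Finset.card_univ,
              SimpleGraph.card_neighborFinset_eq_degree]
    have h2 : G.minDegree ≤ G.degree w := G.minDegree_le_degree w
    have h3 : G.degree w ≤ n := by
      rw [hn, ← SimpleGraph.card_neighborFinset_eq_degree]
      exact Finset.card_le_univ _
    rw [hd]
    push_cast
    have : ((n - G.degree w : ℕ) : ℝ) = (n : ℝ) - G.degree w := by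
      push_cast [Nat.cast_sub h3]; ring
    calc ((W \ G.neighborFinset w).card : ℝ) ≤ ((n - G.degree w : ℕ) : ℝ) := by exact_mod_cast h1
      _ = (n : ℝ) - G.degree w := this
      _ ≤ (n : ℝ) - G.minDegree := by
          have : (G.minDegree : ℝ) ≤ G.degree w := by exact_mod_cast h2
          linarith
  have hR : (0 : ℝ) < 2 * (r : ℝ) - 3 := by
    have : (3 : ℝ) ≤ r := by exact_mod_cast hr
    linarith
  have hd0 : 0 ≤ d := by
    have h3 : G.minDegree ≤ n := by
      calc G.minDegree ≤ G.degree u := G.minDegree_le_degree u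
        _ ≤ n := by
          rw [hn, ← SimpleGraph.card_neighborFinset_eq_degree]
          exact Finset.card_le_univ _
    rw [hd]
    have : (G.minDegree : ℝ) ≤ n := by exact_mod_cast h3
    linarith
  -- key numeric inequality
  have hkey : ((r - 2 : ℕ) : ℝ) * d < W.card + d := by
    have hr2 : ((r - 2 : ℕ) : ℝ) = (r : ℝ) - 2 := by
      push_cast [Nat.cast_sub (by omega : 2 ≤ r)]; ring
    rw [hr2, hd]
    rw [div_add' _ _ _ hR.ne', div_mul_eq_mul_div, div_le_iff₀ hR] at hδ hcon
    have hnn : (0 : ℝ) ≤ n := Nat.cast_nonneg n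
    have hε1 : (1 : ℝ) ≤ n := by exact_mod_cast hn1
    have hr3 : (3 : ℝ) ≤ (r : ℝ) := by exact_mod_cast hr
    nlinarith [mul_pos hε (lt_of_lt_of_le one_pos hε1), mul_nonneg hε.le hnn,
      mul_nonneg (mul_nonneg hε.le hnn) (by linarith : (0:ℝ) ≤ (r:ℝ) - 3)]
  obtain ⟨t, htW, htcl⟩ := greedy_clique G d hd0 (r - 2) W (fun w _ => hdle w) hkey
  have hvb : ∀ b ∈ t, G.Adj v b := by
    intro b hb
    have := htW hb
    simp only [hW, Finset.mem_inter, SimpleGraph.mem_neighborFinset] at this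
    exact this.2
  have hub : ∀ b ∈ insert v t, G.Adj u b := by
    intro b hb
    rcases Finset.mem_insert.mp hb with rfl | hb
    · exact hadj
    · have := htW hb
      rw [hW, Finset.mem_inter, SimpleGraph.mem_neighborFinset] at this
      exact this.1
  have hclique : G.IsNClique (r - 2 + 1 + 1) (insert u (insert v t)) :=
    (htcl.insert hvb).insert hub
  have : r - 2 + 1 + 1 = r := by omega
  rw [this] at hclique
  exact hfree _ hclique
end

section
/- Let r ≥ 3 and ε > 0, and let G = (V,E) be a maximal K_r-free graph with minimum degree δ(G) ≥ ((2r-5)/(2r-3) + ε)·|V|. Let U ⊆ V with |U| < ε·|V|, and let v, w be vertices having the same neighbourhood outside U, i.e. N(v) \ U = N(w) \ U. Then every vertex u ∉ {v,w} that is adjacent to v is also adjacent to w. -/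
open Finset

private lemma aux_kr {V : Type} {G : SimpleGraph V} {r : ℕ} (hr : 3 ≤ r)
    (hfree : G.CliqueFree r) {S : Finset V} (hS : G.IsNClique (r-2) S)
    {p q : V} (hpq : G.Adj p q) (hp : ∀ a ∈ S, G.Adj p a) (hq : ∀ a ∈ S, G.Adj q a) :
    False := by
  classical
  have hqS : q ∉ S := fun h => G.loopless.irrefl q (hq q h)
  have hpS : p ∉ S := fun h => G.loopless.irrefl p (hp p h)
  have hpq' : p ≠ q := hpq.ne
  have hclique : G.IsClique (↑(insert p (insert q S)) : Set V) := by
    rw [coe_insert, coe_insert]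
    refine SimpleGraph.IsClique.insert ?_ ?_
    · exact hS.isClique.insert (fun b hb _ => hq b hb)
    · rintro b hb hne
      rcases Set.mem_insert_iff.mp hb with rfl | hb
      · exact hpq
      · exact hp b hb
  refine hfree (insert p (insert q S)) ⟨hclique, ?_⟩
  rw [card_insert_of_notMem (by simp [hpS, hpq']), card_insert_of_notMem hqS, hS.card_eq]
  omega

private lemma aux_common_nbhd {V : Type} [Fintype V] [DecidableEq V] (G : SimpleGraph V) [DecidableRel G.Adj]
    (Q : Finset V) (bb : ℝ)
    (hb : ∀ x : V, (((univ.filter (fun y => ¬ G.Adj x y)).card : ℝ)) ≤ bb) :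
    (Fintype.card V : ℝ) - ((univ.filter (fun y => ∀ a ∈ Q, G.Adj a y)).card : ℝ)
      ≤ (Q.card : ℝ) * bb := by
  have hsplit : (univ.filter (fun y => ∀ a ∈ Q, G.Adj a y)).card
      + (univ.filter (fun y => ¬ ∀ a ∈ Q, G.Adj a y)).card = Fintype.card V := by
    rw [card_filter_add_card_filter_not, card_univ]
  have hsub : univ.filter (fun y => ¬ ∀ a ∈ Q, G.Adj a y)
      ⊆ Q.biUnion (fun a => univ.filter (fun y => ¬ G.Adj a y)) := by
    intro y hy
    simp only [mem_filter, mem_univ, true_and] at hy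
    push_neg at hy
    obtain ⟨a, ha, h⟩ := hy
    simp only [mem_biUnion, mem_filter, mem_univ, true_and]
    exact ⟨a, ha, h⟩
  have h2 : (univ.filter (fun y => ¬ ∀ a ∈ Q, G.Adj a y)).card
      ≤ ∑ a ∈ Q, (univ.filter (fun y => ¬ G.Adj a y)).card :=
    le_trans (card_le_card hsub) card_biUnion_le
  have h3 : ((∑ a ∈ Q, (univ.filter (fun y => ¬ G.Adj a y)).card : ℕ) : ℝ)
      ≤ (Q.card : ℝ) * bb := by
    push_cast
    calc (∑ a ∈ Q, ((univ.filter (fun y => ¬ G.Adj a y)).card : ℝ))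
        ≤ Q.card • bb := Finset.sum_le_card_nsmul _ _ _ (fun x _ => hb x)
      _ = (Q.card : ℝ) * bb := nsmul_eq_mul _ _
  have h4 : ((univ.filter (fun y => ¬ ∀ a ∈ Q, G.Adj a y)).card : ℝ)
      ≤ (Q.card : ℝ) * bb := le_trans (by exact_mod_cast h2) h3
  have h5 : ((univ.filter (fun y => ∀ a ∈ Q, G.Adj a y)).card : ℝ)
      + ((univ.filter (fun y => ¬ ∀ a ∈ Q, G.Adj a y)).card : ℝ) = (Fintype.card V : ℝ) := by
    exact_mod_cast hsplit
  linarith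

private lemma aux_filter_size {V : Type} [Fintype V] (G : SimpleGraph V) [DecidableRel G.Adj]
    (bb : ℝ)
    (hb : ∀ x : V, (((univ.filter (fun y => ¬ G.Adj x y)).card : ℝ)) ≤ bb)
    (P : Finset V) (c : V) :
    ((P.card : ℝ)) - bb ≤ ((P.filter (fun y => G.Adj c y)).card : ℝ) := by
  have hsplit : (P.filter (fun y => G.Adj c y)).card
      + (P.filter (fun y => ¬ G.Adj c y)).card = P.card :=
    card_filter_add_card_filter_not _
  have hsub : P.filter (fun y => ¬ G.Adj c y) ⊆ univ.filter (fun y => ¬ G.Adj c y) := by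
    intro y hy
    simp only [mem_filter, mem_univ, true_and]
    exact (mem_filter.mp hy).2
  have h2 : ((P.filter (fun y => ¬ G.Adj c y)).card : ℝ) ≤ bb :=
    le_trans (by exact_mod_cast card_le_card hsub) (hb c)
  have h3 : ((P.filter (fun y => G.Adj c y)).card : ℝ)
      + ((P.filter (fun y => ¬ G.Adj c y)).card : ℝ) = (P.card : ℝ) := by
    exact_mod_cast hsplit
  linarith

private lemma aux_main (r : ℕ) (hr : 3 ≤ r) (ε : ℝ)
    {V : Type} [Fintype V]
    (G : SimpleGraph V) [DecidableRel G.Adj]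
    (hfree : G.CliqueFree r)
    (hδ : ((2 * (r : ℝ) - 5) / (2 * (r : ℝ) - 3) + ε) * Fintype.card V ≤ G.minDegree)
    (U : Set V) (hU : (U.ncard : ℝ) < ε * Fintype.card V)
    (v w u : V)
    (T2 : ∀ x : V, G.Adj w x → x ∉ U → G.Adj v x)
    (huv : G.Adj u v) (hnuw : ¬ G.Adj u w) (huU : u ∈ U) :
    ∀ (k : ℕ) (S : Finset V), G.IsNClique (r-2) S →
      (∀ a ∈ S, G.Adj u a) → (∀ a ∈ S, G.Adj w a) →
      (S.filter (fun a => ¬ G.Adj v a)).card = k → False := by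
  classical
  have hrR : (3:ℝ) ≤ (r:ℝ) := by exact_mod_cast hr
  have hc2 : (0:ℝ) < 2*(r:ℝ) - 3 := by linarith
  have hn1 : (1:ℝ) ≤ (Fintype.card V : ℝ) := by
    have : Nonempty V := ⟨u⟩
    have h := Fintype.card_pos (α := V)
    exact_mod_cast h
  set Uf : Finset V := (Set.toFinite U).toFinset with hUfdef
  have hmemUf : ∀ x : V, x ∈ Uf ↔ x ∈ U := fun x => Set.Finite.mem_toFinset _
  have hUcard : ((Uf.card : ℝ)) < ε * (Fintype.card V : ℝ) := by
    rw [hUfdef, ← Set.ncard_eq_toFinset_card]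
    exact hU
  have hU1 : (1:ℝ) ≤ (Uf.card : ℝ) := by
    have hu : u ∈ Uf := (hmemUf u).mpr huU
    exact_mod_cast card_pos.mpr ⟨u, hu⟩
  have ht1 : (1:ℝ) < ε * (Fintype.card V : ℝ) := lt_of_le_of_lt hU1 hUcard
  have htpos : (0:ℝ) < ε * (Fintype.card V : ℝ) := by linarith
  set bb : ℝ := 2*(Fintype.card V : ℝ)/(2*(r:ℝ)-3) - ε * (Fintype.card V : ℝ) with hbbdef
  have hb : ∀ x : V, (((univ.filter (fun y => ¬ G.Adj x y)).card : ℝ)) ≤ bb := by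
    intro x
    have hdeg : ((2 * (r : ℝ) - 5) / (2 * (r : ℝ) - 3) + ε) * (Fintype.card V : ℝ)
        ≤ (G.degree x : ℝ) := by
      refine le_trans hδ ?_
      exact_mod_cast G.minDegree_le_degree x
    have hcardsplit : (univ.filter (fun y => G.Adj x y)).card
        + (univ.filter (fun y => ¬ G.Adj x y)).card = Fintype.card V := by
      rw [card_filter_add_card_filter_not, card_univ]
    have hdegeq : (univ.filter (fun y => G.Adj x y)).card = G.degree x := by
      rw [SimpleGraph.degree, SimpleGraph.neighborFinset_eq_filter]
    have h6 : (G.degree x : ℝ) + ((univ.filter (fun y => ¬ G.Adj x y)).card : ℝ)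
        = (Fintype.card V : ℝ) := by
      rw [← hdegeq]
      exact_mod_cast hcardsplit
    have harith : (Fintype.card V : ℝ)
        - ((2 * (r : ℝ) - 5) / (2 * (r : ℝ) - 3) + ε) * (Fintype.card V : ℝ)
        = 2*(Fintype.card V : ℝ)/(2*(r:ℝ)-3) - ε * (Fintype.card V : ℝ) := by
      field_simp
      ring
    rw [hbbdef]
    linarith
  have hbb0 : (0:ℝ) ≤ bb := le_trans (by positivity) (hb u)
  have hbbrel : (2*(r:ℝ)-3) * bb
      = 2*(Fintype.card V : ℝ) - (2*(r:ℝ)-3) * (ε * (Fintype.card V : ℝ)) := by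
    rw [hbbdef]
    field_simp
  intro k
  induction k using Nat.strong_induction_on with
  | _ k IH =>
  intro S hS hSu hSw hk
  have hScard : S.card = r - 2 := hS.card_eq
  by_cases hk1 : k ≤ 1
  · -- Endgame B : at most one vertex of S is not adjacent to v
    have hfil1 : (S.filter (fun a => ¬ G.Adj v a)).card ≤ 1 := by omega
    obtain ⟨τ, hτS, hQv⟩ : ∃ τ ∈ S, ∀ a ∈ S, a ≠ τ → G.Adj v a := by
      by_cases hfe : (S.filter (fun a => ¬ G.Adj v a)).card = 0
      · have hSne : S.Nonempty := by
          rw [← card_pos, hScard]; omega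
        obtain ⟨τ, hτ⟩ := hSne
        refine ⟨τ, hτ, fun a ha _ => ?_⟩
        by_contra hna
        have : a ∈ S.filter (fun a => ¬ G.Adj v a) := mem_filter.mpr ⟨ha, hna⟩
        rw [card_eq_zero] at hfe
        rw [hfe] at this
        exact notMem_empty a this
      · have h1 : (S.filter (fun a => ¬ G.Adj v a)).card = 1 := by omega
        obtain ⟨τ, hτ⟩ := card_eq_one.mp h1
        have hτmem : τ ∈ S.filter (fun a => ¬ G.Adj v a) := by rw [hτ]; exact mem_singleton_self τ
        refine ⟨τ, (mem_filter.mp hτmem).1, fun a ha hne => ?_⟩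
        by_contra hna
        have : a ∈ S.filter (fun a => ¬ G.Adj v a) := mem_filter.mpr ⟨ha, hna⟩
        rw [hτ, mem_singleton] at this
        exact hne this
    set Q : Finset V := S.erase τ with hQdef
    have hQcard : Q.card = r - 3 := by
      rw [hQdef, card_erase_of_mem hτS, hScard]
      omega
    set P : Finset V := univ.filter (fun y => ∀ a ∈ Q, G.Adj a y) with hPdef
    have hPQadj : ∀ x ∈ P, ∀ a ∈ Q, G.Adj a x := by
      intro x hx
      have := (mem_filter.mp hx).2
      exact this
    have hxS : ∀ x ∈ P, G.Adj τ x → ∀ a ∈ S, G.Adj x a := by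
      intro x hx hτx a ha
      by_cases haτ : a = τ
      · rw [haτ]; exact hτx.symm
      · exact ((hPQadj x hx) a (mem_erase.mpr ⟨haτ, ha⟩)).symm
    have nAC : ∀ x ∈ P, G.Adj u x → G.Adj τ x → False := fun x hx h1 h3 =>
      aux_kr hr hfree hS h1 hSu (hxS x hx h3)
    have nBC : ∀ x ∈ P, G.Adj w x → G.Adj τ x → False := fun x hx h2 h3 =>
      aux_kr hr hfree hS h2 hSw (hxS x hx h3)
    have hQvadj : ∀ a ∈ Q, G.Adj v a := fun a ha =>
      hQv a (mem_of_mem_erase ha) (ne_of_mem_erase ha)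
    have hvQ : v ∉ Q := fun h => G.loopless.irrefl v (hQvadj v h)
    have hSvQ : G.IsNClique (r-2) (insert v Q) := by
      constructor
      · rw [coe_insert]
        refine (hS.isClique.subset (coe_subset.mpr (erase_subset _ _))).insert ?_
        intro b hb _
        exact hQvadj b hb
      · rw [card_insert_of_notMem hvQ, hQcard]
        omega
    have nAB : ∀ x ∈ P, G.Adj u x → G.Adj w x → x ∈ Uf ∨ x = v := by
      intro x hx h1 h2
      by_contra hcon
      push_neg at hcon
      obtain ⟨hxU, hxv⟩ := hcon
      have hvx : G.Adj v x := T2 x h2 (fun h => hxU ((hmemUf x).mpr h))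
      refine aux_kr hr hfree hSvQ h1 ?_ ?_
      · intro a ha
        rcases mem_insert.mp ha with rfl | ha
        · exact huv
        · exact hSu a (mem_of_mem_erase ha)
      · intro a ha
        rcases mem_insert.mp ha with rfl | ha
        · exact hvx.symm
        · exact (hPQadj x hx a ha).symm
    set A : Finset V := P.filter (fun y => G.Adj u y) with hA
    set B : Finset V := P.filter (fun y => G.Adj w y) with hB
    set C : Finset V := P.filter (fun y => G.Adj τ y) with hC
    have hABC : A.card + B.card + C.card ≤ P.card + (Uf.card + 1) := by
      have h1 := card_union_add_card_inter (A ∪ B) C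
      have h2 := card_union_add_card_inter A B
      have hACBC : (A ∪ B) ∩ C = ∅ := by
        rw [eq_empty_iff_forall_notMem]
        intro x hx
        rw [mem_inter, mem_union] at hx
        obtain ⟨hab, hc⟩ := hx
        have hxP : x ∈ P := (mem_filter.mp hc).1
        have hτx : G.Adj τ x := (mem_filter.mp hc).2
        rcases hab with h | h
        · exact nAC x hxP (mem_filter.mp h).2 hτx
        · exact nBC x hxP (mem_filter.mp h).2 hτx
      rw [hACBC, card_empty] at h1
      have hABsub : A ∩ B ⊆ insert v Uf := by
        intro x hx
        rw [mem_inter] at hx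
        have hxP : x ∈ P := (mem_filter.mp hx.1).1
        rcases nAB x hxP (mem_filter.mp hx.1).2 (mem_filter.mp hx.2).2 with h | h
        · exact mem_insert_of_mem h
        · rw [h]; exact mem_insert_self _ _
      have hUnP : (A ∪ B ∪ C) ⊆ P := by
        intro x hx
        rcases mem_union.mp hx with h | h
        · rcases mem_union.mp h with h | h
          · exact filter_subset _ _ h
          · exact filter_subset _ _ h
        · exact filter_subset _ _ h
      have c1 := card_le_card hABsub
      have c2 := card_le_card hUnP
      have c3 := card_insert_le v Uf
      omega
    have hPlow := aux_common_nbhd G Q bb hb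
    have hQR : ((Q.card : ℕ) : ℝ) = (r:ℝ) - 3 := by
      rw [hQcard, Nat.cast_sub (by omega : 3 ≤ r)]
      norm_num
    rw [hQR] at hPlow
    have hAR := aux_filter_size G bb hb P u
    have hBR := aux_filter_size G bb hb P w
    have hCR := aux_filter_size G bb hb P τ
    rw [← hA] at hAR
    rw [← hB] at hBR
    rw [← hC] at hCR
    have hABCR : (A.card:ℝ) + B.card + C.card ≤ (P.card:ℝ) + ((Uf.card:ℝ) + 1) := by
      exact_mod_cast hABC
    have hX3 : 3*(ε*(Fintype.card V : ℝ)) ≤ (2*(r:ℝ)-3)*(ε*(Fintype.card V : ℝ)) := by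
      have h0 : (0:ℝ) ≤ (2*(r:ℝ)-6) * (ε*(Fintype.card V : ℝ)) :=
        mul_nonneg (by linarith) (le_of_lt htpos)
      linarith only [h0]
    have h12 : 2*((r:ℝ)-3)*bb + 3*bb = (2*(r:ℝ)-3)*bb := by ring
    linarith only [hPlow, hAR, hBR, hCR, hABCR, hUcard, ht1, hbbrel, hX3, h12]
  · -- k ≥ 2
    push_neg at hk1
    have h2k : 1 < (S.filter (fun a => ¬ G.Adj v a)).card := by omega
    obtain ⟨τ₁, hτ₁f, τ₂, hτ₂f, hτne⟩ := one_lt_card.mp h2k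
    have hτ₁S : τ₁ ∈ S := (mem_filter.mp hτ₁f).1
    have hτ₂S : τ₂ ∈ S := (mem_filter.mp hτ₂f).1
    have hr4 : 4 ≤ r := by
      have hle : (S.filter (fun a => ¬ G.Adj v a)).card ≤ S.card := card_filter_le _ _
      omega
    set Q : Finset V := (S.erase τ₁).erase τ₂ with hQdef
    have hτ₂e : τ₂ ∈ S.erase τ₁ := mem_erase.mpr ⟨hτne.symm, hτ₂S⟩
    have hQcard : Q.card = r - 4 := by
      rw [hQdef, card_erase_of_mem hτ₂e, card_erase_of_mem hτ₁S, hScard]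
      omega
    set P : Finset V := univ.filter (fun y => ∀ a ∈ Q, G.Adj a y) with hPdef
    have hPQadj : ∀ x ∈ P, ∀ a ∈ Q, G.Adj a x := by
      intro x hx
      exact (mem_filter.mp hx).2
    have hmemS : ∀ a ∈ S, a = τ₁ ∨ a = τ₂ ∨ a ∈ Q := by
      intro a ha
      by_cases h1 : a = τ₁
      · exact Or.inl h1
      by_cases h2 : a = τ₂
      · exact Or.inr (Or.inl h2)
      exact Or.inr (Or.inr (mem_erase.mpr ⟨h2, mem_erase.mpr ⟨h1, ha⟩⟩))
    have hxSall : ∀ x ∈ P, G.Adj τ₁ x → G.Adj τ₂ x → ∀ a ∈ S, G.Adj x a := by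
      intro x hx h1 h2 a ha
      rcases hmemS a ha with rfl | h
      · exact h1.symm
      rcases h with rfl | h
      · exact h2.symm
      · exact (hPQadj x hx a h).symm
    have Na : ∀ x ∈ P, G.Adj u x → G.Adj τ₁ x → G.Adj τ₂ x → False := fun x hx hu h1 h2 =>
      aux_kr hr hfree hS hu hSu (hxSall x hx h1 h2)
    have Nc : ∀ x ∈ P, G.Adj w x → G.Adj τ₁ x → G.Adj τ₂ x → False := fun x hx hw h1 h2 =>
      aux_kr hr hfree hS hw hSw (hxSall x hx h1 h2)
    -- swap lemma (pattern b)
    have Nb : ∀ τa τb : V, τa ∈ S → τb ∈ S.filter (fun a => ¬ G.Adj v a) →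
        (∀ a ∈ S, a ≠ τa → a ≠ τb → a ∈ Q) →
        ∀ x ∈ P, x ∉ Uf → G.Adj u x → G.Adj w x → G.Adj τa x → False := by
      intro τa τb hτaS hτbf hcover x hxP hxU hux hwx hax
      have hτbS : τb ∈ S := (mem_filter.mp hτbf).1
      have hvx : G.Adj v x := T2 x hwx (fun h => hxU ((hmemUf x).mpr h))
      have hxall : ∀ a ∈ S.erase τb, G.Adj a x := by
        intro a ha
        obtain ⟨haτb, haS⟩ := mem_erase.mp ha
        by_cases haa : a = τa
        · rw [haa]; exact hax
        · exact hPQadj x hxP a (hcover a haS haa haτb)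
      have hxnS : x ∉ S.erase τb := fun h => G.loopless.irrefl x (hxall x h)
      have hS'clique : G.IsNClique (r-2) (insert x (S.erase τb)) := by
        constructor
        · rw [coe_insert]
          refine (hS.isClique.subset (coe_subset.mpr (erase_subset _ _))).insert ?_
          intro b hb _
          exact (hxall b hb).symm
        · rw [card_insert_of_notMem hxnS, card_erase_of_mem hτbS, hScard]
          omega
      have hS'u : ∀ a ∈ insert x (S.erase τb), G.Adj u a := by
        intro a ha
        rcases mem_insert.mp ha with rfl | ha
        · exact hux
        · exact hSu a (mem_of_mem_erase ha)
      have hS'w : ∀ a ∈ insert x (S.erase τb), G.Adj w a := by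
        intro a ha
        rcases mem_insert.mp ha with rfl | ha
        · exact hwx
        · exact hSw a (mem_of_mem_erase ha)
      have hfilS' : (insert x (S.erase τb)).filter (fun a => ¬ G.Adj v a)
          = (S.filter (fun a => ¬ G.Adj v a)).erase τb := by
        rw [filter_insert, if_neg (not_not_intro hvx), filter_erase]
      have hmcard : ((insert x (S.erase τb)).filter (fun a => ¬ G.Adj v a)).card = k - 1 := by
        rw [hfilS', card_erase_of_mem hτbf, hk]
      exact IH (k-1) (by omega) (insert x (S.erase τb)) hS'clique hS'u hS'w hmcard
    by_cases hbad : ∃ x, x ∈ P ∧ x ∉ Uf ∧ G.Adj u x ∧ G.Adj w x ∧ (G.Adj τ₁ x ∨ G.Adj τ₂ x)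
    · obtain ⟨x, hxP, hxU, hux, hwx, hor⟩ := hbad
      have hcov12 : ∀ a ∈ S, a ≠ τ₁ → a ≠ τ₂ → a ∈ Q := by
        intro a ha h1 h2
        rcases hmemS a ha with rfl | h
        · exact absurd rfl h1
        rcases h with rfl | h
        · exact absurd rfl h2
        · exact h
      rcases hor with h | h
      · exact Nb τ₁ τ₂ hτ₁S hτ₂f (fun a ha h1 h2 => hcov12 a ha h1 h2) x hxP hxU hux hwx h
      · exact Nb τ₂ τ₁ hτ₂S hτ₁f (fun a ha h1 h2 => hcov12 a ha h2 h1) x hxP hxU hux hwx h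
    · -- counting endgame C
      have hNb1 : ∀ x ∈ P, x ∉ Uf → G.Adj u x → G.Adj w x → G.Adj τ₁ x → False := by
        intro x hxP hxU hux hwx h
        exact hbad ⟨x, hxP, hxU, hux, hwx, Or.inl h⟩
      have hNb2 : ∀ x ∈ P, x ∉ Uf → G.Adj u x → G.Adj w x → G.Adj τ₂ x → False := by
        intro x hxP hxU hux hwx h
        exact hbad ⟨x, hxP, hxU, hux, hwx, Or.inr h⟩
      have hptw : ∀ x ∈ P,
          ((if G.Adj u x then 1 else 0) + (if G.Adj τ₁ x then 1 else 0)
            + (if G.Adj τ₂ x then 1 else 0) + (if G.Adj w x then 1 else 0) : ℕ)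
          ≤ 2 + 2 * (if x ∈ Uf then 1 else 0) := by
        intro x hxP
        by_cases hxU : x ∈ Uf
        · simp only [hxU, if_true]
          have e1 : (if G.Adj u x then 1 else 0) ≤ 1 := by split <;> omega
          have e2 : (if G.Adj τ₁ x then 1 else 0) ≤ 1 := by split <;> omega
          have e3 : (if G.Adj τ₂ x then 1 else 0) ≤ 1 := by split <;> omega
          have e4 : (if G.Adj w x then 1 else 0) ≤ 1 := by split <;> omega
          omega
        · by_cases h1 : G.Adj u x <;> by_cases h2 : G.Adj τ₁ x <;>
            by_cases h3 : G.Adj τ₂ x <;> by_cases h4 : G.Adj w x <;>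
            first
              | exact absurd (Na x hxP h1 h2 h3) not_false
              | exact absurd (Nc x hxP h4 h2 h3) not_false
              | exact absurd (hNb1 x hxP hxU h1 h4 h2) not_false
              | exact absurd (hNb2 x hxP hxU h1 h4 h3) not_false
              | simp [h1, h2, h3, h4, hxU]
      have hcnt : (P.filter (fun y => G.Adj u y)).card + (P.filter (fun y => G.Adj τ₁ y)).card
          + (P.filter (fun y => G.Adj τ₂ y)).card + (P.filter (fun y => G.Adj w y)).card
          ≤ 2 * P.card + 2 * Uf.card := by
        have e1 : (P.filter (fun y => G.Adj u y)).card
            = ∑ x ∈ P, (if G.Adj u x then 1 else 0) := card_filter _ _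
        have e2 : (P.filter (fun y => G.Adj τ₁ y)).card
            = ∑ x ∈ P, (if G.Adj τ₁ x then 1 else 0) := card_filter _ _
        have e3 : (P.filter (fun y => G.Adj τ₂ y)).card
            = ∑ x ∈ P, (if G.Adj τ₂ x then 1 else 0) := card_filter _ _
        have e4 : (P.filter (fun y => G.Adj w y)).card
            = ∑ x ∈ P, (if G.Adj w x then 1 else 0) := card_filter _ _
        have esum : (P.filter (fun y => G.Adj u y)).card + (P.filter (fun y => G.Adj τ₁ y)).card
            + (P.filter (fun y => G.Adj τ₂ y)).card + (P.filter (fun y => G.Adj w y)).card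
            = ∑ x ∈ P, ((if G.Adj u x then 1 else 0) + (if G.Adj τ₁ x then 1 else 0)
              + (if G.Adj τ₂ x then 1 else 0) + (if G.Adj w x then 1 else 0)) := by
          rw [e1, e2, e3, e4, ← sum_add_distrib, ← sum_add_distrib, ← sum_add_distrib]
        rw [esum]
        calc ∑ x ∈ P, ((if G.Adj u x then 1 else 0) + (if G.Adj τ₁ x then 1 else 0)
              + (if G.Adj τ₂ x then 1 else 0) + (if G.Adj w x then 1 else 0))
            ≤ ∑ x ∈ P, (2 + 2 * (if x ∈ Uf then 1 else 0)) := sum_le_sum hptw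
          _ = 2 * P.card + 2 * (P.filter (fun x => x ∈ Uf)).card := by
              rw [sum_add_distrib, sum_const, ← mul_sum, ← card_filter]
              simp [mul_comm]
          _ ≤ 2 * P.card + 2 * Uf.card := by
              have : (P.filter (fun x => x ∈ Uf)).card ≤ Uf.card :=
                card_le_card (fun x hx => (mem_filter.mp hx).2)
              omega
      have hPlow := aux_common_nbhd G Q bb hb
      have hQR : ((Q.card : ℕ) : ℝ) = (r:ℝ) - 4 := by
        rw [hQcard, Nat.cast_sub (by omega : 4 ≤ r)]
        norm_num
      rw [hQR] at hPlow
      have hA1 := aux_filter_size G bb hb P u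
      have hA2 := aux_filter_size G bb hb P τ₁
      have hA3 := aux_filter_size G bb hb P τ₂
      have hA4 := aux_filter_size G bb hb P w
      have hcntR : ((P.filter (fun y => G.Adj u y)).card : ℝ)
          + ((P.filter (fun y => G.Adj τ₁ y)).card : ℝ)
          + ((P.filter (fun y => G.Adj τ₂ y)).card : ℝ)
          + ((P.filter (fun y => G.Adj w y)).card : ℝ)
          ≤ 2 * (P.card : ℝ) + 2 * (Uf.card : ℝ) := by
        exact_mod_cast hcnt
      have hrR4 : (4:ℝ) ≤ (r:ℝ) := by exact_mod_cast hr4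
      have hX5 : 5*(ε*(Fintype.card V : ℝ)) ≤ (2*(r:ℝ)-3)*(ε*(Fintype.card V : ℝ)) := by
        have h0 : (0:ℝ) ≤ (2*(r:ℝ)-8) * (ε*(Fintype.card V : ℝ)) :=
          mul_nonneg (by linarith) (le_of_lt htpos)
        linarith only [h0]
      have h12c : 2*((r:ℝ)-4)*bb + 4*bb = (2*(r:ℝ)-3)*bb - bb := by ring
      linarith only [hPlow, hA1, hA2, hA3, hA4, hcntR, hUcard, htpos, hbbrel, hX5, hbb0, h12c]

/-- In a maximal `K_r`-free graph with minimum degree at least `((2r-5)/(2r-3)+ε)|V|`,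
if `U` has size `|U| < ε|V|` and `v`, `w` have the same neighbourhood outside `U`, then
every vertex `u ∉ {v,w}` adjacent to `v` is also adjacent to `w`. -/
theorem adj_transfer_of_same_nbhd_outside (r : ℕ) (hr : 3 ≤ r) (ε : ℝ) (hε : 0 < ε)
    (V : Type) [Fintype V]
    (G : SimpleGraph V) [DecidableRel G.Adj]
    (hfree : G.CliqueFree r)
    (hmax : ∀ x y : V, x ≠ y → ¬ G.Adj x y →
      ¬ (G ⊔ SimpleGraph.edge x y).CliqueFree r)
    (hδ : ((2 * (r : ℝ) - 5) / (2 * (r : ℝ) - 3) + ε) * Fintype.card V ≤ G.minDegree)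
    (U : Set V) (hU : (U.ncard : ℝ) < ε * Fintype.card V)
    (v w : V) (hvw : G.neighborSet v \ U = G.neighborSet w \ U) :
    ∀ u : V, u ≠ v → u ≠ w → G.Adj u v → G.Adj u w := by
  classical
  intro u huv' huw' hadj
  by_contra hnadj
  have T2 : ∀ x : V, G.Adj w x → x ∉ U → G.Adj v x := by
    intro x hx hxU
    have hmem : x ∈ G.neighborSet w \ U := ⟨hx, hxU⟩
    rw [← hvw] at hmem
    exact hmem.1
  have T1 : ∀ x : V, G.Adj v x → x ∉ U → G.Adj w x := by
    intro x hx hxU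
    have hmem : x ∈ G.neighborSet v \ U := ⟨hx, hxU⟩
    rw [hvw] at hmem
    exact hmem.1
  have huU : u ∈ U := by
    by_contra h
    exact hnadj ((T1 u hadj.symm h).symm)
  have hmax' := hmax u w huw' hnadj
  rw [SimpleGraph.CliqueFree] at hmax'
  push_neg at hmax'
  obtain ⟨t, ht⟩ := hmax'
  have hGadj : ∀ a ∈ t, ∀ b ∈ t, a ≠ b → ¬(a = u ∧ b = w) → ¬(a = w ∧ b = u) → G.Adj a b := by
    intro a ha b hb hab hn1 hn2
    have h := ht.isClique (Finset.mem_coe.mpr ha) (Finset.mem_coe.mpr hb) hab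
    rw [SimpleGraph.sup_adj] at h
    rcases h with h | h
    · exact h
    · rw [SimpleGraph.edge_adj] at h
      rcases h.1 with ⟨h1, h2⟩ | ⟨h1, h2⟩
      · exact absurd ⟨h1, h2⟩ hn1
      · exact absurd ⟨h1, h2⟩ hn2
  have hut : u ∈ t := by
    by_contra hu
    refine hfree t ⟨?_, ht.card_eq⟩
    intro a ha b hb hab
    refine hGadj a (Finset.mem_coe.mp ha) b (Finset.mem_coe.mp hb) hab ?_ ?_
    · rintro ⟨rfl, -⟩
      exact hu (Finset.mem_coe.mp ha)
    · rintro ⟨-, rfl⟩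
      exact hu (Finset.mem_coe.mp hb)
  have hwt : w ∈ t := by
    by_contra hw
    refine hfree t ⟨?_, ht.card_eq⟩
    intro a ha b hb hab
    refine hGadj a (Finset.mem_coe.mp ha) b (Finset.mem_coe.mp hb) hab ?_ ?_
    · rintro ⟨-, rfl⟩
      exact hw (Finset.mem_coe.mp hb)
    · rintro ⟨rfl, -⟩
      exact hw (Finset.mem_coe.mp ha)
  set S : Finset V := (t.erase u).erase w with hSdef
  have hwt' : w ∈ t.erase u := Finset.mem_erase.mpr ⟨Ne.symm huw', hwt⟩
  have hScard : S.card = r - 2 := by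
    rw [hSdef, Finset.card_erase_of_mem hwt', Finset.card_erase_of_mem hut, ht.card_eq]
    omega
  have hSmem : ∀ a ∈ S, a ≠ w ∧ a ≠ u ∧ a ∈ t := by
    intro a ha
    rw [hSdef] at ha
    obtain ⟨h1, h2⟩ := Finset.mem_erase.mp ha
    obtain ⟨h3, h4⟩ := Finset.mem_erase.mp h2
    exact ⟨h1, h3, h4⟩
  have hS : G.IsNClique (r-2) S := by
    refine ⟨?_, hScard⟩
    intro a ha b hb hab
    obtain ⟨haw, hau, hat⟩ := hSmem a (Finset.mem_coe.mp ha)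
    obtain ⟨hbw, hbu, hbt⟩ := hSmem b (Finset.mem_coe.mp hb)
    exact hGadj a hat b hbt hab (fun h => hbw h.2) (fun h => haw h.1)
  have hSu : ∀ a ∈ S, G.Adj u a := by
    intro a ha
    obtain ⟨haw, hau, hat⟩ := hSmem a ha
    exact hGadj u hut a hat (Ne.symm hau) (fun h => haw h.2) (fun h => huw' h.1)
  have hSw : ∀ a ∈ S, G.Adj w a := by
    intro a ha
    obtain ⟨haw, hau, hat⟩ := hSmem a ha
    exact hGadj w hwt a hat (Ne.symm haw) (fun h => huw' h.1.symm) (fun h => hau h.2)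
  exact aux_main r hr ε G hfree hδ U hU v w u T2 hadj hnadj huU
    ((S.filter (fun a => ¬ G.Adj v a)).card) S hS hSu hSw rfl
end

section
/- Let r ≥ 3 and ε > 0, and let G = (V,E) be a K_r-free graph on n vertices with minimum degree δ(G) ≥ ((2r-5)/(2r-3) + ε)·n. Let U ⊆ V with |U| ≤ ε·n/4, and let u ≠ v be vertices having the same neighbourhood outside U, i.e. N(u) \ U = N(v) \ U. Then u and v are not adjacent in G. -/
/-- In a `K_r`-free graph on `n` vertices with minimum degree at least
`((2r-5)/(2r-3)+ε)·n`, if `U` has size `|U| ≤ εn/4` and the distinct vertices `u`, `v`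
have the same neighbourhood outside `U`, then `u` and `v` are not adjacent. -/
theorem nonadj_of_same_nbhd_outside (r : ℕ) (hr : 3 ≤ r) (ε : ℝ) (hε : 0 < ε)
    (V : Type) [Fintype V]
    (G : SimpleGraph V) [DecidableRel G.Adj]
    (hfree : G.CliqueFree r)
    (hδ : ((2 * (r : ℝ) - 5) / (2 * (r : ℝ) - 3) + ε) * Fintype.card V ≤ G.minDegree)
    (U : Set V) (hU : (U.ncard : ℝ) ≤ ε * Fintype.card V / 4)
    (u v : V) (huv : u ≠ v)
    (hsame : G.neighborSet u \ U = G.neighborSet v \ U) :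
    ¬ G.Adj u v := by
  classical
  intro hadj
  set n := Fintype.card V with hn
  set δ := G.minDegree with hδdef
  set T : Finset V → Finset V := fun s => Finset.univ.filter (fun w => ∀ x ∈ s, G.Adj x w)
    with hTdef
  have hn0 : 0 < n := Fintype.card_pos_iff.mpr ⟨u⟩
  have hn0R : (0:ℝ) < n := by exact_mod_cast hn0
  have hrR : (3:ℝ) ≤ (r:ℝ) := by exact_mod_cast hr
  have hr3 : (0:ℝ) < 2*(r:ℝ) - 3 := by linarith
  have hδn : (δ:ℝ) ≤ n := by
    have := G.minDegree_le_degree u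
    have h2 := G.degree_lt_card_verts u
    have : δ < n := lt_of_le_of_lt this h2
    exact_mod_cast this.le
  -- multiplied-out min degree bound
  have hδ' : ((2*(r:ℝ) - 5) + ε * (2*(r:ℝ)-3)) * n ≤ (δ:ℝ) * (2*(r:ℝ)-3) := by
    have h := mul_le_mul_of_nonneg_right hδ hr3.le
    have hne : (2*(r:ℝ)-3) ≠ 0 := ne_of_gt hr3
    calc ((2*(r:ℝ) - 5) + ε * (2*(r:ℝ)-3)) * n
        = ((2 * (r : ℝ) - 5) / (2 * (r : ℝ) - 3) + ε) * n * (2*(r:ℝ)-3) := by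
          field_simp
      _ ≤ (δ:ℝ) * (2*(r:ℝ)-3) := h
  -- degree of any vertex is at least δ (used below)
  have hdeg : ∀ w : V, (δ:ℝ) ≤ G.degree w := fun w => by
    exact_mod_cast G.minDegree_le_degree w
  -- base: common neighbourhood of u and v is big
  have hbase : (δ:ℝ) - U.ncard ≤ (T {u, v}).card := by
    have hsub : G.neighborFinset u \ U.toFinset ⊆ T {u, v} := by
      intro w hw
      simp only [Finset.mem_sdiff, SimpleGraph.mem_neighborFinset, Set.mem_toFinset] at hw
      have hwv : w ∈ G.neighborSet v \ U := by
        rw [← hsame]; exact ⟨hw.1, hw.2⟩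
      simp only [hTdef, Finset.mem_filter, Finset.mem_univ, true_and]
      intro x hx
      simp only [Finset.mem_insert, Finset.mem_singleton] at hx
      rcases hx with rfl | rfl
      · exact hw.1
      · exact hwv.1
    have h1 : (G.neighborFinset u).card ≤ (G.neighborFinset u \ U.toFinset).card
        + U.toFinset.card := Finset.card_le_card_sdiff_add_card
    have h2 : (G.neighborFinset u \ U.toFinset).card ≤ (T {u, v}).card :=
      Finset.card_le_card hsub
    have hdu : δ ≤ (G.neighborFinset u).card := by
      rw [SimpleGraph.card_neighborFinset_eq_degree]
      exact G.minDegree_le_degree u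
    have hUcard : U.ncard = U.toFinset.card := Set.ncard_eq_toFinset_card' U
    have : δ ≤ (T {u, v}).card + U.toFinset.card := le_trans hdu (le_trans h1 (by omega))
    rw [hUcard]
    have := (Nat.cast_le (α := ℝ)).mpr this
    push_cast at this ⊢
    linarith
  -- inductive construction of big cliques
  have main : ∀ k : ℕ, k + 2 ≤ r → ∃ s : Finset V, G.IsNClique (k+2) s ∧
      (δ:ℝ) - U.ncard - k * ((n:ℝ) - δ) ≤ (T s).card := by
    intro k
    induction k with
    | zero =>
      intro _
      refine ⟨{u, v}, ?_, by simpa using hbase⟩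
      rw [SimpleGraph.isNClique_iff]
      constructor
      · intro a ha b hb hab
        simp only [Finset.coe_insert, Finset.coe_singleton, Set.mem_insert_iff,
          Set.mem_singleton_iff] at ha hb
        rcases ha with rfl | rfl <;> rcases hb with rfl | rfl
        · exact absurd rfl hab
        · exact hadj
        · exact hadj.symm
        · exact absurd rfl hab
      · rw [Finset.card_insert_of_notMem (by simpa using huv), Finset.card_singleton]
    | succ k ih =>
      intro hk
      obtain ⟨s, hclique, hcard⟩ := ih (by omega)
      -- T s is nonempty since the real lower bound is positive
      have hkR : (k:ℝ) ≤ (r:ℝ) - 3 := by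
        have : (k:ℝ) + 3 ≤ (r:ℝ) := by exact_mod_cast hk
        linarith
      have hpos : (0:ℝ) < (δ:ℝ) - U.ncard - k * ((n:ℝ) - δ) := by
        nlinarith [mul_nonneg (sub_nonneg.mpr hkR) (sub_nonneg.mpr hδn),
          mul_pos hε hn0R, mul_nonneg hε.le (sub_nonneg.mpr hδn),
          mul_nonneg (mul_nonneg hε.le hn0R.le) (sub_nonneg.mpr hrR)]
      have hTpos : 0 < (T s).card := by
        by_contra h
        push_neg at h
        interval_cases h' : (T s).card
        · push_cast [h'] at hcard; linarith
      obtain ⟨w, hw⟩ := Finset.card_pos.mp hTpos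
      have hwadj : ∀ x ∈ s, G.Adj x w := by
        simp only [hTdef, Finset.mem_filter] at hw
        exact hw.2
      have hws : w ∉ s := fun h => G.irrefl (hwadj w h)
      refine ⟨insert w s, hclique.insert (fun b hb => (hwadj b hb).symm), ?_⟩
      -- card bound for the new common neighbourhood
      have hsubset : T s ∩ G.neighborFinset w ⊆ T (insert w s) := by
        intro x hx
        simp only [Finset.mem_inter, hTdef, Finset.mem_filter, Finset.mem_univ, true_and,
          SimpleGraph.mem_neighborFinset] at hx ⊢
        intro y hy
        rcases Finset.mem_insert.mp hy with rfl | hy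
        · exact hx.2
        · exact hx.1 y hy
      have hsd : (T s \ G.neighborFinset w).card ≤ n - G.degree w := by
        have : T s \ G.neighborFinset w ⊆ Finset.univ \ G.neighborFinset w := by
          intro x hx
          simp only [Finset.mem_sdiff] at hx ⊢
          exact ⟨Finset.mem_univ x, hx.2⟩
        calc (T s \ G.neighborFinset w).card
            ≤ (Finset.univ \ G.neighborFinset w).card := Finset.card_le_card this
          _ = n - G.degree w := by
              rw [Finset.card_sdiff_of_subset (Finset.subset_univ _), Finset.card_univ,
                SimpleGraph.card_neighborFinset_eq_degree]
      have hsplit : (T s).card = (T s ∩ G.neighborFinset w).card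
          + (T s \ G.neighborFinset w).card :=
        (Finset.card_inter_add_card_sdiff _ _).symm
      have hdegw : G.degree w ≤ n := (G.degree_lt_card_verts w).le
      have hchain : (T s).card ≤ (T (insert w s)).card + (n - G.degree w) := by
        rw [hsplit]
        exact Nat.add_le_add (Finset.card_le_card hsubset) hsd
      have hchainR : ((T s).card : ℝ) ≤ (T (insert w s)).card + ((n:ℝ) - G.degree w) := by
        have := (Nat.cast_le (α := ℝ)).mpr hchain
        push_cast [Nat.cast_sub hdegw] at this
        linarith
      have hdw := hdeg w
      push_cast
      linarith
  obtain ⟨s, hclique, _⟩ := main (r - 2) (by omega)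
  have : r - 2 + 2 = r := by omega
  rw [this] at hclique
  exact hfree s hclique
end

section
/- Let r ≥ 3, let ε > 0, and set m = ⌈4 ln(8/ε)/ε²⌉ + 1. Let G = (V,E) be a graph on n ≥ m vertices with minimum degree δ(G) ≥ ((2r-5)/(2r-3) + ε)·n. Then more than half of all m-element subsets X ⊆ V satisfy |U_X| ≤ ε·n/4, where U_X = { v ∈ V : |N(v) ∩ X| < ((2r-5)/(2r-3) + ε/2)·m }; that is, the number of m-element subsets X of V with |U_X| ≤ ε·n/4 is greater than (1/2)·C(n,m). -/
open Finset

variable {α : Type*} [DecidableEq α]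

lemma sum_pc_succ (u : Finset α) (m : ℕ) (f : Finset α → ℝ) :
    ((m+1 : ℕ) : ℝ) * ∑ X ∈ u.powersetCard (m+1), f X
      = ∑ Y ∈ u.powersetCard m, ∑ x ∈ u \ Y, f (insert x Y) := by
  have h1 : ((m+1:ℕ):ℝ) * ∑ X ∈ u.powersetCard (m+1), f X
      = ∑ X ∈ u.powersetCard (m+1), ∑ x ∈ X, f X := by
    rw [Finset.mul_sum]
    refine Finset.sum_congr rfl fun X hX => ?_
    rw [Finset.sum_const, (Finset.mem_powersetCard.1 hX).2, nsmul_eq_mul]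
  have l := Finset.sum_sigma' (u.powersetCard (m+1)) (fun X => (X : Finset α)) (fun X _ => f X)
  have r := Finset.sum_sigma' (u.powersetCard m) (fun Y => u \ Y) (fun Y x => f (insert x Y))
  rw [h1, l, r]
  refine Finset.sum_nbij' (fun p => ⟨p.1.erase p.2, p.2⟩) (fun p => ⟨insert p.2 p.1, p.2⟩)
    ?_ ?_ ?_ ?_ ?_
  · rintro ⟨X, x⟩ hp
    rw [Finset.mem_sigma] at hp ⊢
    obtain ⟨hX, hx⟩ := hp
    obtain ⟨hXu, hXc⟩ := Finset.mem_powersetCard.1 hX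
    refine ⟨Finset.mem_powersetCard.2 ⟨(Finset.erase_subset _ _).trans hXu, ?_⟩, ?_⟩
    · rw [Finset.card_erase_of_mem hx, hXc]; rfl
    · exact Finset.mem_sdiff.2 ⟨hXu hx, Finset.notMem_erase _ _⟩
  · rintro ⟨Y, x⟩ hp
    rw [Finset.mem_sigma] at hp ⊢
    obtain ⟨hY, hx⟩ := hp
    obtain ⟨hYu, hYc⟩ := Finset.mem_powersetCard.1 hY
    obtain ⟨hxu, hxY⟩ := Finset.mem_sdiff.1 hx
    refine ⟨Finset.mem_powersetCard.2 ⟨?_, ?_⟩, Finset.mem_insert_self _ _⟩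
    · exact Finset.insert_subset hxu hYu
    · rw [Finset.card_insert_of_notMem hxY, hYc]
  · rintro ⟨X, x⟩ hp
    rw [Finset.mem_sigma] at hp
    simp [Finset.insert_erase hp.2]
  · rintro ⟨Y, x⟩ hp
    rw [Finset.mem_sigma] at hp
    have := (Finset.mem_sdiff.1 hp.2).2
    simp [Finset.erase_insert this]
  · rintro ⟨X, x⟩ hp
    rw [Finset.mem_sigma] at hp
    simp [Finset.insert_erase hp.2]

lemma count_pc (u : Finset α) (w : α) (hw : w ∈ u) (m : ℕ) :
    ((u.powersetCard (m+1)).filter (fun Y => w ∈ Y)).card = (u.card - 1).choose m := by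
  rw [← Finset.card_erase_of_mem hw, ← Finset.card_powersetCard m (u.erase w)]
  refine Finset.card_nbij' (fun Y => Y.erase w) (fun Z => insert w Z) ?_ ?_ ?_ ?_
  · intro Y hY
    obtain ⟨hY, hwY⟩ := Finset.mem_filter.1 hY
    obtain ⟨hYu, hYc⟩ := Finset.mem_powersetCard.1 hY
    refine Finset.mem_powersetCard.2 ⟨fun x hx => ?_, ?_⟩
    · obtain ⟨hxw, hxY⟩ := Finset.mem_erase.1 hx
      exact Finset.mem_erase.2 ⟨hxw, hYu hxY⟩
    · rw [Finset.card_erase_of_mem hwY, hYc]; rfl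
  · intro Z hZ
    obtain ⟨hZu, hZc⟩ := Finset.mem_powersetCard.1 hZ
    have hwZ : w ∉ Z := fun h => (Finset.mem_erase.1 (hZu h)).1 rfl
    refine Finset.mem_filter.2 ⟨Finset.mem_powersetCard.2 ⟨?_, ?_⟩, Finset.mem_insert_self _ _⟩
    · exact Finset.insert_subset hw ((hZu.trans (Finset.erase_subset _ _)))
    · rw [Finset.card_insert_of_notMem hwZ, hZc]
  · intro Y hY
    exact Finset.insert_erase (Finset.mem_filter.1 hY).2
  · intro Z hZ
    have hwZ : w ∉ Z := fun h => (Finset.mem_erase.1 ((Finset.mem_powersetCard.1 hZ).1 h)).1 rfl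
    exact Finset.erase_insert hwZ

lemma sum_inter_card (u N : Finset α) (hN : N ⊆ u) (m : ℕ) :
    u.card * ∑ Y ∈ u.powersetCard m, (Y ∩ N).card = N.card * (m * u.card.choose m) := by
  cases m with
  | zero => simp
  | succ m =>
    have hs : ∑ Y ∈ u.powersetCard (m+1), (Y ∩ N).card
        = N.card * (u.card - 1).choose m := by
      have h1 : ∀ Y : Finset α, (Y ∩ N).card = ∑ w ∈ N, if w ∈ Y then 1 else 0 := by
        intro Y
        rw [← Finset.card_filter]
        congr 1
        rw [Finset.filter_mem_eq_inter, Finset.inter_comm]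
      calc ∑ Y ∈ u.powersetCard (m+1), (Y ∩ N).card
          = ∑ Y ∈ u.powersetCard (m+1), ∑ w ∈ N, if w ∈ Y then 1 else 0 :=
            Finset.sum_congr rfl fun Y _ => h1 Y
        _ = ∑ w ∈ N, ∑ Y ∈ u.powersetCard (m+1), if w ∈ Y then 1 else 0 := Finset.sum_comm
        _ = ∑ w ∈ N, ((u.powersetCard (m+1)).filter (fun Y => w ∈ Y)).card :=
            Finset.sum_congr rfl fun w _ => (Finset.card_filter _ _).symm
        _ = ∑ _w ∈ N, (u.card - 1).choose m :=
            Finset.sum_congr rfl fun w hw => count_pc u w (hN hw) m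
        _ = N.card * (u.card - 1).choose m := by rw [Finset.sum_const, smul_eq_mul]
    rw [hs]
    rcases Nat.eq_zero_or_pos u.card with h0 | hpos
    · have : N = ∅ := Finset.subset_empty.1 (by rwa [← Finset.card_eq_zero.1 h0])
      simp [this]
    · obtain ⟨k, hk⟩ := Nat.exists_eq_succ_of_ne_zero (Nat.pos_iff_ne_zero.1 hpos)
      rw [hk, Nat.succ_sub_one]
      calc k.succ * (N.card * k.choose m) = N.card * (k.succ * k.choose m) := by ring
        _ = N.card * (k.succ.choose m.succ * m.succ) := by exact congrArg _ (Nat.add_one_mul_choose_eq k m)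
        _ = N.card * ((m+1) * k.succ.choose (m+1)) := by
          simp only [Nat.succ_eq_add_one]
          ring

lemma mgf_le (u N : Finset α) (hN : N ⊆ u) (lam : ℝ) (h0 : 0 < lam) (h1 : lam ≤ 1) :
    ∀ m : ℕ, m ≤ u.card →
      ∑ X ∈ u.powersetCard m, lam ^ ((X ∩ N).card)
        ≤ (u.card.choose m : ℝ) * (1 - (1 - lam) * (N.card / u.card)) ^ m := by
  intro m
  induction m with
  | zero => intro _; simp
  | succ m ih =>
    intro hm1
    have hm : m ≤ u.card := Nat.le_of_succ_le hm1
    have hn0 : 0 < u.card := lt_of_lt_of_le (Nat.succ_pos m) hm1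
    set n := u.card with hn
    set d := N.card with hd
    have hdn : d ≤ n := Finset.card_le_card hN
    have hh0 : (0:ℝ) ≤ 1 - (1 - lam) * ((d:ℝ) / n) := by
      have hfrac0 : (0:ℝ) ≤ (d:ℝ)/n := by positivity
      have hfrac1 : (d:ℝ)/n ≤ 1 := by
        rw [div_le_one (by exact_mod_cast hn0)]
        exact_mod_cast hdn
      nlinarith
    obtain ⟨h, hhdef⟩ : ∃ x : ℝ, x = 1 - (1 - lam) * ((d:ℝ) / n) := ⟨_, rfl⟩
    rw [← hhdef] at hh0
    -- inner sum computation
    have key : ∀ Y ∈ u.powersetCard m,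
        ∑ x ∈ u \ Y, lam ^ (((insert x Y) ∩ N).card)
          = lam ^ ((Y ∩ N).card) * (((n:ℝ) - m) - (1 - lam) * ((d:ℝ) - (Y ∩ N).card)) := by
      intro Y hY
      obtain ⟨hYu, hYc⟩ := Finset.mem_powersetCard.1 hY
      have hsplit : u \ Y = (N \ Y) ∪ ((u \ Y) \ N) := by
        ext x
        simp only [Finset.mem_sdiff, Finset.mem_union]
        constructor
        · rintro ⟨hxu, hxY⟩
          by_cases hxN : x ∈ N
          · exact Or.inl ⟨hxN, hxY⟩
          · exact Or.inr ⟨⟨hxu, hxY⟩, hxN⟩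
        · rintro (⟨hxN, hxY⟩ | ⟨⟨hxu, hxY⟩, _⟩)
          · exact ⟨hN hxN, hxY⟩
          · exact ⟨hxu, hxY⟩
      have hdisj : Disjoint (N \ Y) ((u \ Y) \ N) := by
        simp only [Finset.disjoint_left, Finset.mem_sdiff]
        rintro x ⟨hxN, _⟩ ⟨_, hxN'⟩
        exact hxN' hxN
      rw [hsplit, Finset.sum_union hdisj]
      have hA : ∀ x ∈ N \ Y, lam ^ (((insert x Y) ∩ N).card) = lam ^ ((Y ∩ N).card) * lam := by
        intro x hx
        obtain ⟨hxN, hxY⟩ := Finset.mem_sdiff.1 hx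
        rw [Finset.insert_inter_of_mem hxN,
          Finset.card_insert_of_notMem (fun hc => hxY (Finset.mem_inter.1 hc).1), pow_succ]
      have hB : ∀ x ∈ (u \ Y) \ N, lam ^ (((insert x Y) ∩ N).card) = lam ^ ((Y ∩ N).card) := by
        intro x hx
        obtain ⟨_, hxN⟩ := Finset.mem_sdiff.1 hx
        rw [Finset.insert_inter_of_notMem hxN]
      rw [Finset.sum_congr rfl hA, Finset.sum_congr rfl hB, Finset.sum_const, Finset.sum_const]
      have hcard1 : ((N \ Y).card : ℝ) = (d:ℝ) - (Y ∩ N).card := by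
        have : (N \ Y).card = d - (N ∩ Y).card := by
          have := Finset.card_sdiff_add_card_inter N Y
          omega
        rw [this, Nat.cast_sub (Finset.card_le_card Finset.inter_subset_left), Finset.inter_comm]
      have hcard2 : (((u \ Y) \ N).card : ℝ) = ((n:ℝ) - m) - ((d:ℝ) - (Y ∩ N).card) := by
        have huY : (u \ Y).card = n - m := by rw [Finset.card_sdiff_of_subset hYu, hYc]
        have hsub : ((u \ Y) \ N).card = (u \ Y).card - (N \ Y).card := by
          have hcongr : (u \ Y) \ (N \ Y) = (u \ Y) \ N := by
            ext x
            simp only [Finset.mem_sdiff]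
            tauto
          have := Finset.card_sdiff_of_subset (t := u \ Y) (s := N \ Y)
            (fun x hx => by
              obtain ⟨hxN, hxY⟩ := Finset.mem_sdiff.1 hx
              exact Finset.mem_sdiff.2 ⟨hN hxN, hxY⟩)
          rw [← hcongr, this]
        have hle : (N \ Y).card ≤ (u \ Y).card := Finset.card_le_card
          (fun x hx => by
            obtain ⟨hxN, hxY⟩ := Finset.mem_sdiff.1 hx
            exact Finset.mem_sdiff.2 ⟨hN hxN, hxY⟩)
        rw [hsub, Nat.cast_sub hle, huY, hcard1,
          Nat.cast_sub (by omega : m ≤ n)]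
      rw [nsmul_eq_mul, nsmul_eq_mul, hcard1, hcard2]
      ring
    have hC : 0 < (n.choose m : ℝ) := by exact_mod_cast Nat.choose_pos hm
    set S := ∑ Y ∈ u.powersetCard m, lam ^ ((Y ∩ N).card) with hS
    set T := ∑ Y ∈ u.powersetCard m, lam ^ ((Y ∩ N).card) * ((d:ℝ) - ((Y ∩ N).card : ℝ)) with hT
    have hS0 : 0 ≤ S := Finset.sum_nonneg fun Y _ => pow_nonneg h0.le _
    have cheb : S * (∑ Y ∈ u.powersetCard m, ((d:ℝ) - ((Y ∩ N).card : ℝ)))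
        ≤ (n.choose m : ℝ) * T := by
      have hmono : MonovaryOn (fun Y : Finset α => lam ^ ((Y ∩ N).card))
          (fun Y : Finset α => (d:ℝ) - ((Y ∩ N).card : ℝ)) (u.powersetCard m : Set (Finset α)) := by
        intro i _ j _ hlt
        simp only at hlt
        have : ((j ∩ N).card : ℝ) < ((i ∩ N).card : ℝ) := by linarith
        exact pow_le_pow_of_le_one h0.le h1 (by exact_mod_cast this.le)
      have := hmono.sum_mul_sum_le_card_mul_sum
      rwa [Finset.card_powersetCard] at this
    have hsum_s : (∑ Y ∈ u.powersetCard m, (((Y ∩ N).card : ℕ) : ℝ))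
        = (d:ℝ) * m * (n.choose m) / n := by
      have := sum_inter_card u N hN m
      have hcast : (n:ℝ) * (∑ Y ∈ u.powersetCard m, (((Y ∩ N).card : ℕ) : ℝ))
          = (d:ℝ) * (m * (n.choose m)) := by exact_mod_cast congrArg (Nat.cast : ℕ → ℝ) this
      field_simp
      linarith [hcast]
    have hsum_g : (∑ Y ∈ u.powersetCard m, ((d:ℝ) - ((Y ∩ N).card : ℝ)))
        = (n.choose m : ℝ) * ((d:ℝ) * ((n:ℝ) - m) / n) := by
      rw [Finset.sum_sub_distrib, Finset.sum_const, Finset.card_powersetCard, hsum_s,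
        nsmul_eq_mul]
      have hne : (n:ℝ) ≠ 0 := by exact_mod_cast hn0.ne'
      field_simp
      ring
    have hTS : S * ((d:ℝ) * ((n:ℝ) - m) / n) ≤ T := by
      rw [hsum_g] at cheb
      have := (mul_le_mul_iff_right₀ hC).1 (by linarith [cheb] : (n.choose m : ℝ) * (S * ((d:ℝ) * ((n:ℝ) - m) / n)) ≤ (n.choose m : ℝ) * T)
      exact this
    have main : ((m+1:ℕ):ℝ) * ∑ X ∈ u.powersetCard (m+1), lam ^ ((X ∩ N).card)
        ≤ S * (((n:ℝ) - m) * h) := by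
      rw [sum_pc_succ u m (fun X => lam ^ ((X ∩ N).card)),
        Finset.sum_congr rfl key]
      have expand : ∑ Y ∈ u.powersetCard m,
          lam ^ ((Y ∩ N).card) * (((n:ℝ) - m) - (1 - lam) * ((d:ℝ) - ((Y ∩ N).card : ℝ)))
          = ((n:ℝ) - m) * S - (1 - lam) * T := by
        rw [hS, hT, Finset.mul_sum, Finset.mul_sum, ← Finset.sum_sub_distrib]
        exact Finset.sum_congr rfl fun Y _ => by ring
      rw [expand]
      have hlam1 : 0 ≤ 1 - lam := by linarith
      have : (1 - lam) * (S * ((d:ℝ) * ((n:ℝ) - m) / n)) ≤ (1 - lam) * T :=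
        mul_le_mul_of_nonneg_left hTS hlam1
      have heq : ((n:ℝ) - m) * S - (1 - lam) * (S * ((d:ℝ) * ((n:ℝ) - m) / n))
          = S * (((n:ℝ) - m) * h) := by
        rw [hhdef]
        field_simp
      linarith
    have hnm0 : (0:ℝ) ≤ (n:ℝ) - m := by
      have : (m:ℝ) ≤ n := by exact_mod_cast hm
      linarith
    have ih' : S ≤ (n.choose m : ℝ) * h ^ m := by rw [hhdef]; exact ih hm
    have final : S * (((n:ℝ) - m) * h) ≤ ((n.choose m : ℝ) * h ^ m) * (((n:ℝ) - m) * h) :=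
      mul_le_mul_of_nonneg_right ih' (by positivity)
    have hchoose : ((n:ℝ) - m) * (n.choose m : ℝ) = ((m+1:ℕ):ℝ) * (n.choose (m+1) : ℝ) := by
      have := Nat.choose_succ_right_eq n m
      have hcast : ((n.choose (m+1) * (m+1) : ℕ) : ℝ) = ((n.choose m * (n - m) : ℕ) : ℝ) := by
        exact_mod_cast congrArg (Nat.cast : ℕ → ℝ) this
      push_cast [Nat.cast_sub hm] at hcast ⊢
      linarith
    have hm1pos : (0:ℝ) < ((m+1:ℕ):ℝ) := by positivity
    rw [show (1 - (1 - lam) * ((N.card:ℝ) / u.card)) = h from hhdef.symm ▸ rfl]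
    rw [← mul_le_mul_iff_right₀ hm1pos]
    calc ((m+1:ℕ):ℝ) * ∑ X ∈ u.powersetCard (m+1), lam ^ ((X ∩ N).card)
        ≤ S * (((n:ℝ) - m) * h) := main
      _ ≤ ((n.choose m : ℝ) * h ^ m) * (((n:ℝ) - m) * h) := final
      _ = (((n:ℝ) - m) * (n.choose m : ℝ)) * h ^ (m+1) := by ring
      _ = ((m+1:ℕ):ℝ) * ((n.choose (m+1) : ℝ) * h ^ (m+1)) := by rw [hchoose]; ring

set_option maxHeartbeats 1000000 in
lemma cubic_exp_bound {x : ℝ} (hx : |x| ≤ 1) :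
    Real.exp x ≤ 1 + x + x^2/2 + 2/9 * |x|^3 := by
  have h := Real.exp_bound hx (by norm_num : 0 < 3)
  have h2 : Real.exp x - (1 + x + x^2/2) ≤ |x|^3 * (4 / (6 * 3)) := by
    have hsum : ∑ i ∈ Finset.range 3, x ^ i / (Nat.factorial i) = 1 + x + x^2/2 := by
      norm_num [Finset.sum_range_succ, Nat.factorial]
    have := (abs_sub_le_iff.1 (by simpa [hsum] using h)).1
    simpa using this.trans_eq (by norm_num [Nat.factorial])
  nlinarith [h2]

set_option maxHeartbeats 1000000 in
lemma scalar_mgf {p e : ℝ} (hp0 : 0 ≤ p) (hp1 : p ≤ 1) (he0 : 0 < e) (he1 : e ≤ 2/3) :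
    1 - (1 - Real.exp (-e)) * p ≤ Real.exp (-(p*e) + e^2/6) := by
  have key : (1 - p + p * Real.exp (-e)) * Real.exp (p*e) ≤ Real.exp (e^2/6) := by
    have hq0 : 0 ≤ 1 - p := by linarith
    have hsplit : (1 - p + p * Real.exp (-e)) * Real.exp (p*e)
        = (1-p) * Real.exp (p*e) + p * Real.exp (-(1-p)*e) := by
      have hx : Real.exp (-(1-p)*e) = Real.exp (-e) * Real.exp (p*e) := by
        rw [← Real.exp_add]
        congr 1
        ring
      rw [hx]
      ring
    rw [hsplit]
    have hA : |p*e| ≤ 1 := by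
      rw [abs_of_nonneg (by positivity)]
      nlinarith
    have hB : |(-(1-p)*e)| ≤ 1 := by
      rw [abs_of_nonpos (by nlinarith)]
      nlinarith
    have h1 := cubic_exp_bound hA
    have h2 := cubic_exp_bound hB
    rw [abs_of_nonneg (by positivity)] at h1
    have hBabs : |(-(1-p)*e)| = (1-p)*e := by
      rw [abs_of_nonpos (by nlinarith)]
      ring
    rw [hBabs] at h2
    have hstep : (1-p) * Real.exp (p*e) + p * Real.exp (-(1-p)*e)
        ≤ 1 + p*(1-p)*e^2/2 + 2/9 * e^3 * (p*(1-p)) * (p^2 + (1-p)^2) := by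
      have e1 : (1-p) * Real.exp (p*e) ≤ (1-p) * (1 + p*e + (p*e)^2/2 + 2/9*(p*e)^3) :=
        mul_le_mul_of_nonneg_left h1 hq0
      have e2 : p * Real.exp (-(1-p)*e) ≤ p * (1 + (-(1-p)*e) + (-(1-p)*e)^2/2 + 2/9*((1-p)*e)^3) :=
        mul_le_mul_of_nonneg_left h2 hp0
      have hid : (1-p) * (1 + p*e + (p*e)^2/2 + 2/9*(p*e)^3)
          + p * (1 + (-(1-p)*e) + (-(1-p)*e)^2/2 + 2/9*((1-p)*e)^3)
          = 1 + p*(1-p)*e^2/2 + 2/9 * e^3 * (p*(1-p)) * (p^2 + (1-p)^2) := by ring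
      linarith [e1, e2]
    have hfinal : 1 + p*(1-p)*e^2/2 + 2/9 * e^3 * (p*(1-p)) * (p^2 + (1-p)^2) ≤ 1 + e^2/6 := by
      have hpq1 : p*(1-p) ≤ 1/4 := by nlinarith [sq_nonneg (2*p-1)]
      have hpq0 : (0:ℝ) ≤ p*(1-p) := mul_nonneg hp0 hq0
      have hsq1 : p^2+(1-p)^2 ≤ 1 := by nlinarith [mul_nonneg hp0 hq0]
      have he2 : (0:ℝ) ≤ e^2 := sq_nonneg e
      have he30 : (0:ℝ) ≤ e^3 := by positivity
      have he3 : e^3 ≤ (2/3)*e^2 := by nlinarith [sq_nonneg e]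
      have t1 : p*(1-p)*e^2/2 ≤ e^2/8 := by nlinarith
      have t2a : e^3 * (p*(1-p)) ≤ ((2/3)*e^2) * (1/4) :=
        mul_le_mul he3 hpq1 hpq0 (by positivity)
      have t2b : e^3 * (p*(1-p)) * (p^2+(1-p)^2) ≤ e^3 * (p*(1-p)) * 1 :=
        mul_le_mul_of_nonneg_left hsq1 (mul_nonneg he30 hpq0)
      nlinarith [t1, t2a, t2b]
    calc (1-p) * Real.exp (p*e) + p * Real.exp (-(1-p)*e)
        ≤ 1 + p*(1-p)*e^2/2 + 2/9 * e^3 * (p*(1-p)) * (p^2 + (1-p)^2) := hstep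
      _ ≤ 1 + e^2/6 := hfinal
      _ ≤ Real.exp (e^2/6) := by
          have := Real.add_one_le_exp (e^2/6)
          linarith
  have hexp : Real.exp (-(p*e) + e^2/6) = Real.exp (e^2/6) / Real.exp (p*e) := by
    rw [Real.exp_add, Real.exp_neg]
    ring
  rw [hexp, le_div_iff₀ (Real.exp_pos _)]
  calc (1 - (1 - Real.exp (-e)) * p) * Real.exp (p*e)
      = (1 - p + p * Real.exp (-e)) * Real.exp (p*e) := by ring
    _ ≤ Real.exp (e^2/6) := key
section Main

set_option maxHeartbeats 1600000 in
/-- For `r ≥ 3`, `ε > 0` and `m = ⌈4 ln(8/ε)/ε²⌉ + 1`, in every graph on `n ≥ m` vertices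
with minimum degree at least `((2r-5)/(2r-3)+ε)·n`, more than half of all `m`-element
vertex subsets `X` satisfy `|U_X| ≤ εn/4`, where
`U_X = {v : |N(v) ∩ X| < ((2r-5)/(2r-3)+ε/2)·m}`. -/
theorem majority_of_sets_good (r : ℕ) (hr : 3 ≤ r) (ε : ℝ) (hε : 0 < ε)
    (m : ℕ) (hm : m = ⌈4 * Real.log (8 / ε) / ε ^ 2⌉₊ + 1)
    (V : Type) [Fintype V] (hn : m ≤ Fintype.card V)
    (G : SimpleGraph V) [DecidableRel G.Adj]
    (hδ : ((2 * (r : ℝ) - 5) / (2 * (r : ℝ) - 3) + ε) * Fintype.card V ≤ G.minDegree) :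
    (((Fintype.card V).choose m : ℝ) / 2) <
      (({X : Finset V | X.card = m ∧
        (({v : V | ((G.neighborSet v ∩ ↑X).ncard : ℝ) <
            ((2 * (r : ℝ) - 5) / (2 * (r : ℝ) - 3) + ε / 2) * m}.ncard : ℝ)
          ≤ ε * Fintype.card V / 4)} : Set (Finset V)).ncard : ℝ) := by
  classical
  set c0 : ℝ := (2 * (r : ℝ) - 5) / (2 * (r : ℝ) - 3) with hc0def
  set n : ℕ := Fintype.card V with hndef
  have hrR : (3:ℝ) ≤ (r:ℝ) := by exact_mod_cast hr
  have hden : (0:ℝ) < 2 * (r:ℝ) - 3 := by linarith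
  have hc013 : 1/3 ≤ c0 := by
    rw [hc0def, le_div_iff₀ hden]
    linarith
  have hc01 : c0 < 1 := by
    rw [hc0def, div_lt_one hden]
    linarith
  have hm1 : 1 ≤ m := by omega
  have hn0 : 0 < n := lt_of_lt_of_le hm1 hn
  have hV : Nonempty V := Fintype.card_pos_iff.1 hn0
  obtain ⟨v0⟩ := hV
  have hnR : (0:ℝ) < (n:ℝ) := by exact_mod_cast hn0
  -- ε < 2/3
  have hdeg0 : G.degree v0 < n := by
    have := G.degree_lt_card_verts v0
    simpa [hndef] using this
  have hε23 : ε < 2/3 := by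
    have h1 : ((c0 + ε) * n : ℝ) ≤ G.minDegree := hδ
    have h2 : (G.minDegree : ℝ) ≤ G.degree v0 := by
      exact_mod_cast G.minDegree_le_degree v0
    have h3 : ((G.degree v0 : ℕ) : ℝ) ≤ (n:ℝ) - 1 := by
      have : G.degree v0 + 1 ≤ n := hdeg0
      have := (Nat.cast_le (α := ℝ)).2 this
      push_cast at this
      linarith
    have hlt : c0 + ε < 1 := by
      nlinarith
    linarith
  -- log facts
  have h8ε : (1:ℝ) < 8/ε := by
    rw [lt_div_iff₀ hε]
    linarith
  have hL0 : 0 < Real.log (8/ε) := Real.log_pos h8ε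
  have hmR : 4 * Real.log (8/ε) / ε^2 < (m:ℝ) := by
    have h1 : (4 * Real.log (8/ε) / ε^2) ≤ (⌈4 * Real.log (8/ε) / ε^2⌉₊ : ℝ) := Nat.le_ceil _
    have h2 : (m:ℝ) = (⌈4 * Real.log (8/ε) / ε^2⌉₊ : ℝ) + 1 := by
      rw [hm]
      push_cast
      ring
    linarith
  -- the bad-set for each vertex
  set lam : ℝ := Real.exp (-ε) with hlamdef
  have hlam0 : 0 < lam := Real.exp_pos _
  have hlam1 : lam ≤ 1 := Real.exp_le_one_iff.2 (by linarith)
  set A : Finset (Finset V) := (Finset.univ : Finset V).powersetCard m with hAdef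
  have hAcard : A.card = n.choose m := by
    rw [hAdef, Finset.card_powersetCard, Finset.card_univ]
  set bad : V → Finset (Finset V) :=
    fun v => A.filter (fun X => ((X ∩ G.neighborFinset v).card : ℝ) < (c0 + ε/2) * m)
    with hbaddef
  have hC0 : (0:ℝ) < (n.choose m : ℝ) := by
    exact_mod_cast Nat.choose_pos hn
  set β : ℝ := Real.exp (-(ε^2 * m)/3) with hβdef
  have hβε : β < ε/8 := by
    have h1 : -(ε^2 * m)/3 < -Real.log (8/ε) := by
      have : 3 * Real.log (8/ε) < ε^2 * m := by
        have h4 : 4 * Real.log (8/ε) < ε^2 * m := by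
          have := hmR
          rw [div_lt_iff₀ (by positivity : (0:ℝ) < ε^2)] at this
          linarith
        linarith
      linarith
    calc β < Real.exp (-Real.log (8/ε)) := Real.exp_lt_exp.2 h1
      _ = ε/8 := by
          rw [Real.exp_neg, Real.exp_log (by positivity)]
          rw [inv_div]
  have hbadcard : ∀ v : V, ((bad v).card : ℝ) ≤ (n.choose m : ℝ) * β := by
    intro v
    set N : Finset V := G.neighborFinset v with hNdef
    set d : ℕ := N.card with hddef
    have hdeg : d = G.degree v := by
      rw [hddef, hNdef, SimpleGraph.card_neighborFinset_eq_degree]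
    have hphat : c0 + ε ≤ (d:ℝ)/n := by
      rw [le_div_iff₀ hnR]
      have h2 : (G.minDegree : ℝ) ≤ (d:ℝ) := by
        rw [hdeg]
        exact_mod_cast G.minDegree_le_degree v
      linarith [hδ]
    have hdn : (d:ℝ)/n ≤ 1 := by
      rw [div_le_one hnR]
      have : d ≤ n := by
        rw [hdeg]
        exact (G.degree_lt_card_verts v).le
      exact_mod_cast this
    have hphat0 : 0 ≤ (d:ℝ)/n := by positivity
    -- MGF bound
    have hmgf := mgf_le (Finset.univ : Finset V) N (Finset.subset_univ _) lam hlam0 hlam1 m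
      (by rw [Finset.card_univ]; exact hn)
    rw [Finset.card_univ] at hmgf
    set S : ℝ := ∑ X ∈ A, lam ^ ((X ∩ N).card) with hSdef
    have hS_le : S ≤ (n.choose m : ℝ) * (1 - (1 - lam) * ((d:ℝ)/n)) ^ m := hmgf
    -- lower bound on S by bad count
    have hlow : ((bad v).card : ℝ) * Real.exp (-ε * ((c0 + ε/2) * m)) ≤ S := by
      have hsub : ∑ X ∈ bad v, lam ^ ((X ∩ N).card) ≤ S :=
        Finset.sum_le_sum_of_subset_of_nonneg (Finset.filter_subset _ _)
          (fun X _ _ => pow_nonneg hlam0.le _)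
      have hterm : ∀ X ∈ bad v, Real.exp (-ε * ((c0 + ε/2) * m)) ≤ lam ^ ((X ∩ N).card) := by
        intro X hX
        have hXbad : ((X ∩ N).card : ℝ) < (c0 + ε/2) * m := (Finset.mem_filter.1 hX).2
        have : lam ^ ((X ∩ N).card) = Real.exp ((((X ∩ N).card : ℕ):ℝ) * (-ε)) := by
          rw [hlamdef, ← Real.exp_nat_mul]
        rw [this]
        apply Real.exp_le_exp.2
        nlinarith [hXbad]
      calc ((bad v).card : ℝ) * Real.exp (-ε * ((c0 + ε/2) * m))
          = (bad v).card • Real.exp (-ε * ((c0 + ε/2) * m)) := by rw [nsmul_eq_mul]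
        _ ≤ ∑ X ∈ bad v, lam ^ ((X ∩ N).card) := Finset.card_nsmul_le_sum _ _ _ hterm
        _ ≤ S := hsub
    -- scalar bound on the base
    have hbase : (1 - (1 - lam) * ((d:ℝ)/n)) ≤ Real.exp (-(((d:ℝ)/n) * ε) + ε^2/6) := by
      rw [hlamdef]
      exact scalar_mgf hphat0 hdn hε (le_of_lt hε23)
    have hbase0 : 0 ≤ 1 - (1 - lam) * ((d:ℝ)/n) := by
      have h1 : (1-lam)*((d:ℝ)/n) ≤ 1 :=
        mul_le_one₀ (by linarith) hphat0 hdn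
      linarith
    have hpow : (1 - (1 - lam) * ((d:ℝ)/n)) ^ m
        ≤ Real.exp ((m:ℝ) * (-(((d:ℝ)/n) * ε) + ε^2/6)) := by
      calc (1 - (1 - lam) * ((d:ℝ)/n)) ^ m
          ≤ (Real.exp (-(((d:ℝ)/n) * ε) + ε^2/6)) ^ m := pow_le_pow_left₀ hbase0 hbase m
        _ = Real.exp ((m:ℝ) * (-(((d:ℝ)/n) * ε) + ε^2/6)) := (Real.exp_nat_mul _ m).symm
    -- combine
    have hcomb : ((bad v).card : ℝ)
        ≤ (n.choose m : ℝ) * Real.exp ((m:ℝ) * (-(((d:ℝ)/n) * ε) + ε^2/6) + ε * ((c0 + ε/2) * m)) := by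
      have h1 : ((bad v).card : ℝ) * Real.exp (-ε * ((c0 + ε/2) * m))
          ≤ (n.choose m : ℝ) * Real.exp ((m:ℝ) * (-(((d:ℝ)/n) * ε) + ε^2/6)) := by
        calc ((bad v).card : ℝ) * Real.exp (-ε * ((c0 + ε/2) * m)) ≤ S := hlow
          _ ≤ (n.choose m : ℝ) * (1 - (1 - lam) * ((d:ℝ)/n)) ^ m := hS_le
          _ ≤ (n.choose m : ℝ) * Real.exp ((m:ℝ) * (-(((d:ℝ)/n) * ε) + ε^2/6)) :=
              mul_le_mul_of_nonneg_left hpow hC0.le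
      have hepos : 0 < Real.exp (-ε * ((c0 + ε/2) * m)) := Real.exp_pos _
      calc ((bad v).card : ℝ)
          = (((bad v).card : ℝ) * Real.exp (-ε * ((c0 + ε/2) * m))) * (Real.exp (-ε * ((c0 + ε/2) * m)))⁻¹ := by
            field_simp
        _ ≤ ((n.choose m : ℝ) * Real.exp ((m:ℝ) * (-(((d:ℝ)/n) * ε) + ε^2/6))) * (Real.exp (-ε * ((c0 + ε/2) * m)))⁻¹ := by
            apply mul_le_mul_of_nonneg_right h1
            positivity
        _ = (n.choose m : ℝ) * Real.exp ((m:ℝ) * (-(((d:ℝ)/n) * ε) + ε^2/6) + ε * ((c0 + ε/2) * m)) := by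
            rw [← Real.exp_neg, mul_assoc, ← Real.exp_add]
            congr 2
            ring
    refine hcomb.trans (mul_le_mul_of_nonneg_left (Real.exp_le_exp.2 ?_) hC0.le)
    have hmnn : (0:ℝ) ≤ (m:ℝ) := Nat.cast_nonneg m
    have : (m:ℝ) * (-(((d:ℝ)/n) * ε) + ε^2/6) ≤ (m:ℝ) * (-((c0+ε) * ε) + ε^2/6) := by
      apply mul_le_mul_of_nonneg_left _ hmnn
      nlinarith [hphat]
    calc (m:ℝ) * (-(((d:ℝ)/n) * ε) + ε^2/6) + ε * ((c0 + ε/2) * m)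
        ≤ (m:ℝ) * (-((c0+ε) * ε) + ε^2/6) + ε * ((c0 + ε/2) * m) := by linarith
      _ = -(ε^2 * m)/3 := by ring
  -- the U-finset
  set U : Finset V → Finset V := fun X =>
    Finset.univ.filter (fun v => ((X ∩ G.neighborFinset v).card : ℝ) < (c0 + ε/2) * m)
    with hUdef
  have hswap : ∑ X ∈ A, ((U X).card : ℕ) = ∑ v : V, ((bad v).card : ℕ) := by
    have h1 : ∀ X : Finset V, (U X).card
        = ∑ v : V, if ((X ∩ G.neighborFinset v).card : ℝ) < (c0 + ε/2) * m then 1 else 0 := by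
      intro X
      rw [hUdef]
      exact Finset.card_filter _ _
    have h2 : ∀ v : V, (bad v).card
        = ∑ X ∈ A, if ((X ∩ G.neighborFinset v).card : ℝ) < (c0 + ε/2) * m then 1 else 0 := by
      intro v
      rw [hbaddef]
      exact Finset.card_filter _ _
    calc ∑ X ∈ A, (U X).card
        = ∑ X ∈ A, ∑ v : V, (if ((X ∩ G.neighborFinset v).card : ℝ) < (c0 + ε/2) * m then 1 else 0) :=
          Finset.sum_congr rfl fun X _ => h1 X
      _ = ∑ v : V, ∑ X ∈ A, (if ((X ∩ G.neighborFinset v).card : ℝ) < (c0 + ε/2) * m then 1 else 0) :=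
          Finset.sum_comm
      _ = ∑ v : V, ((bad v).card : ℕ) := Finset.sum_congr rfl fun v _ => (h2 v).symm
  have htot : ∑ X ∈ A, (((U X).card : ℕ) : ℝ) ≤ (n:ℝ) * ((n.choose m : ℝ) * β) := by
    have hcast : ∑ X ∈ A, (((U X).card : ℕ) : ℝ) = ∑ v : V, (((bad v).card : ℕ) : ℝ) := by
      exact_mod_cast congrArg (Nat.cast : ℕ → ℝ) hswap
    rw [hcast]
    calc ∑ v : V, (((bad v).card : ℕ) : ℝ) ≤ ∑ _v : V, (n.choose m : ℝ) * β :=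
        Finset.sum_le_sum fun v _ => hbadcard v
      _ = (n:ℝ) * ((n.choose m : ℝ) * β) := by
          rw [Finset.sum_const, Finset.card_univ, nsmul_eq_mul, hndef]
  set Bad : Finset (Finset V) := A.filter (fun X => ¬ (((U X).card : ℝ) ≤ ε * n / 4)) with hBaddef
  set Good : Finset (Finset V) := A.filter (fun X => (((U X).card : ℝ) ≤ ε * n / 4)) with hGooddef
  have hmark : (Bad.card : ℝ) * (ε * n / 4) ≤ ∑ X ∈ A, (((U X).card : ℕ) : ℝ) := by
    have hsub : ∑ X ∈ Bad, (((U X).card : ℕ) : ℝ) ≤ ∑ X ∈ A, (((U X).card : ℕ) : ℝ) :=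
      Finset.sum_le_sum_of_subset_of_nonneg (Finset.filter_subset _ _)
        (fun X _ _ => Nat.cast_nonneg _)
    have hterm : ∀ X ∈ Bad, ε * n / 4 ≤ (((U X).card : ℕ) : ℝ) := by
      intro X hX
      have := (Finset.mem_filter.1 hX).2
      push_neg at this
      exact this.le
    calc (Bad.card : ℝ) * (ε * n / 4) = Bad.card • (ε * n / 4) := by rw [nsmul_eq_mul]
      _ ≤ ∑ X ∈ Bad, (((U X).card : ℕ) : ℝ) := Finset.card_nsmul_le_sum _ _ _ hterm
      _ ≤ ∑ X ∈ A, (((U X).card : ℕ) : ℝ) := hsub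
  have hεn4 : (0:ℝ) < ε * n / 4 := by positivity
  have hBadlt : (Bad.card : ℝ) < (n.choose m : ℝ) / 2 := by
    have h1 : (Bad.card : ℝ) * (ε * n / 4) < ((n.choose m : ℝ) / 2) * (ε * n / 4) := by
      have h2 : (n:ℝ) * ((n.choose m : ℝ) * β) < ((n.choose m : ℝ) / 2) * (ε * n / 4) := by
        have : (n:ℝ) * ((n.choose m : ℝ) * β) < (n:ℝ) * ((n.choose m : ℝ) * (ε/8)) := by
          apply mul_lt_mul_of_pos_left _ hnR
          exact mul_lt_mul_of_pos_left hβε hC0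
        calc (n:ℝ) * ((n.choose m : ℝ) * β) < (n:ℝ) * ((n.choose m : ℝ) * (ε/8)) := this
          _ = ((n.choose m : ℝ) / 2) * (ε * n / 4) := by ring
      linarith [hmark, htot]
    exact (mul_lt_mul_iff_left₀ hεn4).1 h1
  have hGB : Good.card + Bad.card = A.card := by
    rw [hGooddef, hBaddef]
    exact Finset.card_filter_add_card_filter_not _
  -- identify the set in the statement with ↑Good
  have hinner : ∀ X : Finset V,
      ({v : V | ((G.neighborSet v ∩ (↑X : Set V)).ncard : ℝ) < (c0 + ε/2) * m}).ncard
        = (U X).card := by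
    intro X
    have h1 : ∀ v : V, (G.neighborSet v ∩ (↑X : Set V)).ncard = (X ∩ G.neighborFinset v).card := by
      intro v
      have hset : G.neighborSet v ∩ (↑X : Set V) = ↑(X ∩ G.neighborFinset v) := by
        ext w
        simp only [Set.mem_inter_iff, SimpleGraph.mem_neighborSet, Finset.coe_inter,
          Finset.mem_coe, SimpleGraph.mem_neighborFinset]
        tauto
      rw [hset, Set.ncard_coe_finset]
    have h2 : {v : V | ((G.neighborSet v ∩ (↑X : Set V)).ncard : ℝ) < (c0 + ε/2) * m}
        = ↑(U X) := by
      ext v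
      simp only [Set.mem_setOf_eq, hUdef, Finset.coe_filter, Finset.mem_univ, true_and, h1 v]
    rw [h2, Set.ncard_coe_finset]
  have hsets : {X : Finset V | X.card = m ∧
      (({v : V | ((G.neighborSet v ∩ (↑X : Set V)).ncard : ℝ) < (c0 + ε/2) * m}.ncard : ℝ)
        ≤ ε * n / 4)} = ↑Good := by
    ext X
    simp only [Set.mem_setOf_eq, hGooddef, Finset.coe_filter, Finset.mem_coe, hAdef,
      Finset.mem_powersetCard_univ, hinner X]
  have hfinal : (({X : Finset V | X.card = m ∧
      (({v : V | ((G.neighborSet v ∩ (↑X : Set V)).ncard : ℝ) < (c0 + ε/2) * m}.ncard : ℝ)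
        ≤ ε * n / 4)} : Set (Finset V)).ncard : ℝ) = (Good.card : ℝ) := by
    rw [hsets, Set.ncard_coe_finset]
  have hgoal : ((n.choose m : ℝ)) / 2 < (Good.card : ℝ) := by
    have hcast : (Good.card : ℝ) + (Bad.card : ℝ) = (n.choose m : ℝ) := by
      rw [← hAcard]
      exact_mod_cast congrArg (Nat.cast : ℕ → ℝ) hGB
    linarith
  calc ((n.choose m : ℝ)) / 2 < (Good.card : ℝ) := hgoal
    _ = _ := hfinal.symm

end Main
end
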